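/- arXiv:1103.1795 — 4 statements merged into one kernel-verified Lean document; each statement's English description precedes it below -/
import Mathlib

section
/- Under conditions (A1)–(A4), E[||S̄_n(β_{n0})||²] ≤ C · Tr(Σ_{i=1}^n X_i X_i^T) = O(n p_n) for a constant C depending only on the bounds in (A2) and (A4); consequently ||S̄_n(β_{n0})|| = O_p(√(n p_n)). -/
open MeasureTheory ProbabilityTheory Filter Matrix
open scoped BigOperators ENNReal NNReal Topology

noncomputable section

namespace GEE

/-- Euclidean norm of a vector in `Fin k → ℝ`. -/
def vnorm {k : ℕ} (v : Fin k → ℝ) : ℝ := Real.sqrt (∑ i, v i ^ 2)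

/-- Frobenius norm of a real matrix. -/
def fnorm {a b : ℕ} (M : Matrix (Fin a) (Fin b) ℝ) : ℝ :=
  Real.sqrt (∑ i, ∑ j, M i j ^ 2)

/-- The logistic (inverse logit) function. -/
def logistic (t : ℝ) : ℝ := Real.exp t / (1 + Real.exp t)

/-- `Z_n = O_p(a_n)` : boundedness in probability of `Z_n / a_n`. -/
def IsBigOP {Ω : ℕ → Type} [∀ n, MeasurableSpace (Ω n)]
    (P : ∀ n, Measure (Ω n)) (Z : ∀ n, Ω n → ℝ) (a : ℕ → ℝ) : Prop :=
  ∀ ε : ℝ, 0 < ε → ∃ C : ℝ, 0 < C ∧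
    ∀ᶠ n in atTop, P n {ω | C * a n < |Z n ω|} ≤ ENNReal.ofReal ε

/-- `Z_n = o_p(a_n)` : `Z_n / a_n` converges to `0` in probability. -/
def IsLittleOP {Ω : ℕ → Type} [∀ n, MeasurableSpace (Ω n)]
    (P : ∀ n, Measure (Ω n)) (Z : ∀ n, Ω n → ℝ) (a : ℕ → ℝ) : Prop :=
  ∀ ε : ℝ, 0 < ε →
    Tendsto (fun n => P n {ω | ε * a n < |Z n ω|}) atTop (𝓝 0)

/-- Convergence in distribution to the standard normal law, stated via CDFs. -/
def TendstoStdNormal {Ω : ℕ → Type} [∀ n, MeasurableSpace (Ω n)]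
    (P : ∀ n, Measure (Ω n)) (Z : ∀ n, Ω n → ℝ) : Prop :=
  ∀ t : ℝ, Tendsto (fun n => (P n {ω | Z n ω ≤ t}).toReal) atTop
    (𝓝 ((gaussianReal 0 1 (Set.Iic t)).toReal))

/-- Convergence in distribution to the `l`-dimensional standard normal law `N_l(0, I_l)`. -/
def TendstoStdNormalVec {Ω : ℕ → Type} [∀ n, MeasurableSpace (Ω n)] (l : ℕ)
    (P : ∀ n, Measure (Ω n)) (Z : ∀ n, Ω n → Fin l → ℝ) : Prop :=
  ∀ t : Fin l → ℝ, Tendsto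
    (fun n => (P n {ω | ∀ j, Z n ω j ≤ t j}).toReal) atTop
    (𝓝 (((Measure.pi fun _ : Fin l => gaussianReal 0 1) {x | ∀ j, x j ≤ t j}).toReal))

/-- The chi-squared distribution with `l` degrees of freedom, realized as the law of the
sum of squares of `l` i.i.d. standard normals. -/
def chiSq (l : ℕ) : Measure ℝ :=
  Measure.map (fun x : Fin l → ℝ => ∑ j, x j ^ 2)
    (Measure.pi fun _ : Fin l => gaussianReal 0 1)

/-- Convergence in distribution to the chi-squared law with `l` degrees of freedom. -/
def TendstoChiSq {Ω : ℕ → Type} [∀ n, MeasurableSpace (Ω n)] (l : ℕ)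
    (P : ∀ n, Measure (Ω n)) (Z : ∀ n, Ω n → ℝ) : Prop :=
  ∀ t : ℝ, Tendsto (fun n => (P n {ω | Z n ω ≤ t}).toReal) atTop
    (𝓝 ((chiSq l (Set.Iic t)).toReal))

/-- Marginal mean vector `π_i(β)` of cluster `i` under the marginal logistic model. -/
def piv {a b : ℕ} (Xi : Matrix (Fin a) (Fin b) ℝ) (β : Fin b → ℝ) : Fin a → ℝ :=
  fun j => logistic (Xi.mulVec β j)

/-- The diagonal matrix `A_i(β)^{1/2}`. -/
def Ahalf {a b : ℕ} (Xi : Matrix (Fin a) (Fin b) ℝ) (β : Fin b → ℝ) :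
    Matrix (Fin a) (Fin a) ℝ :=
  Matrix.diagonal fun j => Real.sqrt (piv Xi β j * (1 - piv Xi β j))

/-- The diagonal matrix `A_i(β)^{-1/2}`. -/
def Ainvhalf {a b : ℕ} (Xi : Matrix (Fin a) (Fin b) ℝ) (β : Fin b → ℝ) :
    Matrix (Fin a) (Fin a) ℝ :=
  Matrix.diagonal fun j => (Real.sqrt (piv Xi β j * (1 - piv Xi β j)))⁻¹

/-- Standardized residual `ε_i(β) = A_i(β)^{-1/2} (Y_i - π_i(β))`. -/
def eps {a b : ℕ} (Xi : Matrix (Fin a) (Fin b) ℝ) (β : Fin b → ℝ) (Yi : Fin a → ℝ) :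
    Fin a → ℝ :=
  (Ainvhalf Xi β).mulVec (Yi - piv Xi β)

/-- Single-cluster contribution `X_iᵀ A_i^{1/2}(β) W A_i^{-1/2}(β) (Y_i - π_i(β))` to a GEE
estimating function with working inverse-correlation matrix `W`. -/
def Scluster {a b : ℕ} (Xi : Matrix (Fin a) (Fin b) ℝ) (W : Matrix (Fin a) (Fin a) ℝ)
    (β : Fin b → ℝ) (Yi : Fin a → ℝ) : Fin b → ℝ :=
  (Xiᵀ * Ahalf Xi β * W * Ainvhalf Xi β).mulVec (Yi - piv Xi β)

/-- Single-cluster contribution `X_iᵀ A_i^{1/2}(β) W A_i^{1/2}(β) X_i` to `H̄_n(β)`. -/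
def Hcluster {a b : ℕ} (Xi : Matrix (Fin a) (Fin b) ℝ) (W : Matrix (Fin a) (Fin a) ℝ)
    (β : Fin b → ℝ) : Matrix (Fin b) (Fin b) ℝ :=
  Xiᵀ * Ahalf Xi β * W * Ahalf Xi β * Xi

/-- Single-cluster contribution `X_iᵀ A_i^{1/2}(β) W R W A_i^{1/2}(β) X_i` to `M̄_n(β)`. -/
def Mcluster {a b : ℕ} (Xi : Matrix (Fin a) (Fin b) ℝ) (W R : Matrix (Fin a) (Fin a) ℝ)
    (β : Fin b → ℝ) : Matrix (Fin b) (Fin b) ℝ :=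
  Xiᵀ * Ahalf Xi β * W * R * W * Ahalf Xi β * Xi

/-- Single-cluster contribution `X_iᵀ A_i^{1/2}(β) W ε_i(β) ε_i(β)ᵀ W A_i^{1/2}(β) X_i` to the
middle of the sandwich estimator. -/
def Mhatcluster {a b : ℕ} (Xi : Matrix (Fin a) (Fin b) ℝ) (W : Matrix (Fin a) (Fin a) ℝ)
    (β : Fin b → ℝ) (Yi : Fin a → ℝ) : Matrix (Fin b) (Fin b) ℝ :=
  Xiᵀ * Ahalf Xi β * W * vecMulVec (eps Xi β Yi) (eps Xi β Yi) * W * Ahalf Xi β * Xi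

/-- The Jacobian matrix (`∂f/∂βᵀ`) of a map `f : (Fin b → ℝ) → (Fin b → ℝ)` at `β`. -/
def jacobian {b : ℕ} (f : (Fin b → ℝ) → (Fin b → ℝ)) (β : Fin b → ℝ) :
    Matrix (Fin b) (Fin b) ℝ :=
  Matrix.of fun k l => fderiv ℝ (fun x => f x k) β (Pi.single l 1)

/-- Smallest Rayleigh quotient value over unit vectors; equals `λ_min(M)` for symmetric `M`. -/
def lmin {b : ℕ} (M : Matrix (Fin b) (Fin b) ℝ) : ℝ :=
  sInf {r | ∃ v : Fin b → ℝ, vnorm v = 1 ∧ r = v ⬝ᵥ M.mulVec v}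

/-- Largest Rayleigh quotient value over unit vectors; equals `λ_max(M)` for symmetric `M`. -/
def lmax {b : ℕ} (M : Matrix (Fin b) (Fin b) ℝ) : ℝ :=
  sSup {r | ∃ v : Fin b → ℝ, vnorm v = 1 ∧ r = v ⬝ᵥ M.mulVec v}

/-! General GEE versions (arbitrary smooth marginal mean function `μ`). -/

/-- Marginal mean vector `μ_i(β)` in the general GEE model with mean function `mu`. -/
def gpiv {a b : ℕ} (mu : ℝ → ℝ) (Xi : Matrix (Fin a) (Fin b) ℝ) (β : Fin b → ℝ) :
    Fin a → ℝ :=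
  fun j => mu (Xi.mulVec β j)

/-- `A_i(β)^{1/2}` in the general GEE model: diagonal with entries `√(μ̇(X_ijᵀ β))`. -/
def gAhalf {a b : ℕ} (mu : ℝ → ℝ) (Xi : Matrix (Fin a) (Fin b) ℝ) (β : Fin b → ℝ) :
    Matrix (Fin a) (Fin a) ℝ :=
  Matrix.diagonal fun j => Real.sqrt (deriv mu (Xi.mulVec β j))

/-- `A_i(β)^{-1/2}` in the general GEE model. -/
def gAinvhalf {a b : ℕ} (mu : ℝ → ℝ) (Xi : Matrix (Fin a) (Fin b) ℝ) (β : Fin b → ℝ) :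
    Matrix (Fin a) (Fin a) ℝ :=
  Matrix.diagonal fun j => (Real.sqrt (deriv mu (Xi.mulVec β j)))⁻¹

/-- Standardized residual in the general GEE model. -/
def geps {a b : ℕ} (mu : ℝ → ℝ) (Xi : Matrix (Fin a) (Fin b) ℝ) (β : Fin b → ℝ)
    (Yi : Fin a → ℝ) : Fin a → ℝ :=
  (gAinvhalf mu Xi β).mulVec (Yi - gpiv mu Xi β)

/-- Single-cluster contribution to the general GEE estimating function. -/
def gScluster {a b : ℕ} (mu : ℝ → ℝ) (Xi : Matrix (Fin a) (Fin b) ℝ)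
    (W : Matrix (Fin a) (Fin a) ℝ) (β : Fin b → ℝ) (Yi : Fin a → ℝ) : Fin b → ℝ :=
  (Xiᵀ * gAhalf mu Xi β * W * gAinvhalf mu Xi β).mulVec (Yi - gpiv mu Xi β)

/-- Single-cluster contribution to `H̄_n(β)` in the general GEE model. -/
def gHcluster {a b : ℕ} (mu : ℝ → ℝ) (Xi : Matrix (Fin a) (Fin b) ℝ)
    (W : Matrix (Fin a) (Fin a) ℝ) (β : Fin b → ℝ) : Matrix (Fin b) (Fin b) ℝ :=
  Xiᵀ * gAhalf mu Xi β * W * gAhalf mu Xi β * Xi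

/-- Single-cluster contribution to `M̄_n(β)` in the general GEE model. -/
def gMcluster {a b : ℕ} (mu : ℝ → ℝ) (Xi : Matrix (Fin a) (Fin b) ℝ)
    (W R : Matrix (Fin a) (Fin a) ℝ) (β : Fin b → ℝ) : Matrix (Fin b) (Fin b) ℝ :=
  Xiᵀ * gAhalf mu Xi β * W * R * W * gAhalf mu Xi β * Xi

end GEE

open GEE


section AuxLemmas

lemma logistic_pos' (t : ℝ) : 0 < logistic t :=
  div_pos (Real.exp_pos t) (by positivity)

lemma logistic_lt_one' (t : ℝ) : logistic t < 1 := by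
  rw [logistic, div_lt_one (by positivity)]; linarith [Real.exp_pos t]

lemma abs_binary_sub_le_one {y c : ℝ} (hy : y = 0 ∨ y = 1) (h0 : 0 < c) (h1 : c < 1) :
    |y - c| ≤ 1 := by
  rcases hy with h | h <;> subst h <;> rw [abs_le] <;> constructor <;> linarith

lemma scluster_eq {a b : ℕ} (Xi : Matrix (Fin a) (Fin b) ℝ) (W : Matrix (Fin a) (Fin a) ℝ)
    (β : Fin b → ℝ) (Yi : Fin a → ℝ) (k : Fin b) :
    Scluster Xi W β Yi k =
      ∑ j, (Xiᵀ * Ahalf Xi β * W * Ainvhalf Xi β) k j * (Yi j - piv Xi β j) := by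
  simp [Scluster, Matrix.mulVec, dotProduct]

lemma triple_entry {a : ℕ} (d e : Fin a → ℝ) (W : Matrix (Fin a) (Fin a) ℝ) (j j' : Fin a) :
    (Matrix.diagonal d * W * Matrix.diagonal e) j j' = d j * W j j' * e j' := by
  rw [Matrix.mul_diagonal, Matrix.diagonal_mul]

lemma trace_XXt {a b : ℕ} (Xi : Matrix (Fin a) (Fin b) ℝ) :
    (Xi * Xiᵀ).trace = ∑ j, ∑ k, Xi j k ^ 2 := by
  simp [Matrix.trace, Matrix.mul_apply, sq, Matrix.diag]

/-- pointwise bound: ∑ₖ Sᵢₖ² ≤ K · tr(Xᵢ Xᵢᵀ) -/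
lemma pointwise_bound {a b : ℕ} (Xi : Matrix (Fin a) (Fin b) ℝ)
    (W : Matrix (Fin a) (Fin a) ℝ) (β : Fin b → ℝ) (Yi : Fin a → ℝ)
    (b1 b2 : ℝ) (hb1 : 0 < b1) (hb2 : b2 < 1)
    (hY : ∀ j, |Yi j - piv Xi β j| ≤ 1)
    (hpi : ∀ j, b1 ≤ piv Xi β j ∧ piv Xi β j ≤ b2) :
    ∑ k, (Scluster Xi W β Yi k) ^ 2 ≤
      (a * ((Real.sqrt (b1 * (1 - b2)))⁻¹ * (∑ j, ∑ j', |W j j'|)) ^ 2) *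
        (Xi * Xiᵀ).trace := by
  set d : ℝ := (Real.sqrt (b1 * (1 - b2)))⁻¹ with hd
  set r : ℝ := ∑ j, ∑ j', |W j j'| with hr
  have hd0 : 0 ≤ d := by positivity
  have hr0 : 0 ≤ r := Finset.sum_nonneg fun _ _ => Finset.sum_nonneg fun _ _ => abs_nonneg _
  set Z : Fin a → ℝ := Yi - piv Xi β with hZ
  set u : Fin a → ℝ := (Ahalf Xi β * W * Ainvhalf Xi β).mulVec Z with hu
  have hb12 : (0:ℝ) < b1 * (1 - b2) := by nlinarith
  -- entrywise bound on u
  have hubd : ∀ j, |u j| ≤ d * r := by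
    intro j
    have : u j = ∑ j', Real.sqrt (piv Xi β j * (1 - piv Xi β j)) * W j j' *
        (Real.sqrt (piv Xi β j' * (1 - piv Xi β j')))⁻¹ * Z j' := by
      simp only [hu, Matrix.mulVec, dotProduct, Ahalf, Ainvhalf, triple_entry]
    rw [this]
    calc |∑ j', Real.sqrt (piv Xi β j * (1 - piv Xi β j)) * W j j' *
          (Real.sqrt (piv Xi β j' * (1 - piv Xi β j')))⁻¹ * Z j'|
        ≤ ∑ j', |Real.sqrt (piv Xi β j * (1 - piv Xi β j)) * W j j' *
          (Real.sqrt (piv Xi β j' * (1 - piv Xi β j')))⁻¹ * Z j'| :=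
          Finset.abs_sum_le_sum_abs _ _
      _ ≤ ∑ j', d * |W j j'| := by
          apply Finset.sum_le_sum
          intro j' _
          rw [abs_mul, abs_mul, abs_mul]
          have h1 : |Real.sqrt (piv Xi β j * (1 - piv Xi β j))| ≤ 1 := by
            rw [abs_of_nonneg (Real.sqrt_nonneg _)]
            have hp := logistic_pos' (Xi.mulVec β j)
            have hq := logistic_lt_one' (Xi.mulVec β j)
            have : piv Xi β j * (1 - piv Xi β j) ≤ 1 := by
              unfold piv; nlinarith
            calc Real.sqrt (piv Xi β j * (1 - piv Xi β j)) ≤ Real.sqrt 1 :=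
                  Real.sqrt_le_sqrt this
              _ = 1 := Real.sqrt_one
          have h2 : |(Real.sqrt (piv Xi β j' * (1 - piv Xi β j')))⁻¹| ≤ d := by
            rw [abs_of_nonneg (by positivity)]
            rw [hd]
            apply inv_anti₀ (Real.sqrt_pos.mpr hb12)
            apply Real.sqrt_le_sqrt
            have := hpi j'
            nlinarith
          have h3 : |Z j'| ≤ 1 := by
            have := hY j'
            simpa [hZ] using this
          calc |Real.sqrt (piv Xi β j * (1 - piv Xi β j))| * |W j j'| *
                |(Real.sqrt (piv Xi β j' * (1 - piv Xi β j')))⁻¹| * |Z j'|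
              ≤ 1 * |W j j'| * d * 1 := by
                apply mul_le_mul _ h3 (abs_nonneg _) (by positivity)
                apply mul_le_mul _ h2 (abs_nonneg _) (by positivity)
                exact mul_le_mul h1 le_rfl (abs_nonneg _) zero_le_one
            _ = d * |W j j'| := by ring
      _ = d * ∑ j', |W j j'| := by rw [Finset.mul_sum]
      _ ≤ d * r := by
          apply mul_le_mul_of_nonneg_left _ hd0
          exact Finset.single_le_sum (f := fun j => ∑ j', |W j j'|)
            (fun i _ => Finset.sum_nonneg fun _ _ => abs_nonneg _) (Finset.mem_univ j)
  have hSu : ∀ k, Scluster Xi W β Yi k = Xiᵀ.mulVec u k := by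
    intro k
    rw [Scluster, hu, Matrix.mulVec_mulVec, ← hZ]; congr 1; simp only [Matrix.mul_assoc]
  have htr : (Xi * Xiᵀ).trace = ∑ k, ∑ j, (Xi j k) ^ 2 := by
    rw [Finset.sum_comm]
    simp [Matrix.trace, Matrix.mul_apply, sq, Matrix.diag]
  have htr0 : 0 ≤ (Xi * Xiᵀ).trace := by
    rw [htr]; positivity
  have husq : ∑ j, u j ^ 2 ≤ a * (d * r) ^ 2 := by
    calc ∑ j, u j ^ 2 ≤ ∑ _j : Fin a, (d * r) ^ 2 := by
          apply Finset.sum_le_sum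
          intro j _
          calc u j ^ 2 = |u j| ^ 2 := (sq_abs _).symm
            _ ≤ (d * r) ^ 2 := pow_le_pow_left₀ (abs_nonneg _) (hubd j) 2
      _ = a * (d * r) ^ 2 := by simp [mul_comm]
  calc ∑ k, Scluster Xi W β Yi k ^ 2
      = ∑ k, (∑ j, Xiᵀ k j * u j) ^ 2 := by
        simp only [hSu, Matrix.mulVec, dotProduct]
    _ ≤ ∑ k, (∑ j, (Xiᵀ k j) ^ 2) * (∑ j, u j ^ 2) := by
        exact Finset.sum_le_sum fun k _ => Finset.sum_mul_sq_le_sq_mul_sq _ _ _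
    _ = (∑ k, ∑ j, (Xi j k) ^ 2) * (∑ j, u j ^ 2) := by
        rw [← Finset.sum_mul]; simp [Matrix.transpose_apply]
    _ ≤ (Xi * Xiᵀ).trace * (a * (d * r) ^ 2) := by
        rw [htr]
        exact mul_le_mul_of_nonneg_left husq (htr0.trans_eq htr)
    _ = ↑a * (d * r) ^ 2 * (Xi * Xiᵀ).trace := by ring


/-- Per-n expectation bound, integrability and measurability. -/
lemma expectation_bound {m pn n : ℕ} {Ωn : Type} [MeasurableSpace Ωn] (Pn : Measure Ωn)
    [IsProbabilityMeasure Pn] (X : Fin n → Matrix (Fin m) (Fin pn) ℝ)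
    (Y : Fin n → Ωn → Fin m → ℝ) (β : Fin pn → ℝ) (W : Matrix (Fin m) (Fin m) ℝ)
    (hmeas : ∀ i, Measurable (Y i))
    (hbin : ∀ i ω j, Y i ω j = 0 ∨ Y i ω j = 1)
    (hindep : iIndepFun Y Pn)
    (hmean : ∀ i j, ∫ ω, Y i ω j ∂Pn = piv (X i) β j)
    (b1 b2 : ℝ) (hb1 : 0 < b1) (hb2 : b2 < 1)
    (hA2 : ∀ i j, b1 ≤ piv (X i) β j ∧ piv (X i) β j ≤ b2) :
    (∫ ω, vnorm (∑ i, Scluster (X i) W β (Y i ω)) ^ 2 ∂Pn ≤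
       (m * ((Real.sqrt (b1 * (1 - b2)))⁻¹ * (∑ j, ∑ j', |W j j'|)) ^ 2) *
         (∑ i, X i * (X i)ᵀ).trace)
    ∧ Integrable (fun ω => vnorm (∑ i, Scluster (X i) W β (Y i ω)) ^ 2) Pn
    ∧ Measurable (fun ω => vnorm (∑ i, Scluster (X i) W β (Y i ω)) ^ 2) := by
  classical
  set K0 : ℝ := m * ((Real.sqrt (b1 * (1 - b2)))⁻¹ * (∑ j, ∑ j', |W j j'|)) ^ 2 with hK0
  set S : Fin n → Ωn → Fin pn → ℝ := fun i ω => Scluster (X i) W β (Y i ω) with hS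
  set M : Fin n → Matrix (Fin pn) (Fin m) ℝ :=
    fun i => (X i)ᵀ * Ahalf (X i) β * W * Ainvhalf (X i) β with hM
  set c : Fin n → Fin pn → ℝ := fun i k => ∑ j, |M i k j| with hc
  have hSeq : ∀ i ω k, S i ω k = ∑ j, M i k j * (Y i ω j - piv (X i) β j) :=
    fun i ω k => scluster_eq (X i) W β (Y i ω) k
  have hZbd : ∀ i ω j, |Y i ω j - piv (X i) β j| ≤ 1 := fun i ω j =>
    abs_binary_sub_le_one (hbin i ω j) (logistic_pos' _) (logistic_lt_one' _)
  have hfmeas : ∀ i k, Measurable (fun y : Fin m → ℝ =>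
      ∑ j, M i k j * (y j - piv (X i) β j)) := fun i k =>
    Finset.measurable_sum _ fun j _ =>
      (((measurable_pi_apply j).sub measurable_const).const_mul _)
  have hSmeas : ∀ i k, Measurable (fun ω => S i ω k) := by
    intro i k
    have h : (fun ω => S i ω k) =
        (fun y : Fin m → ℝ => ∑ j, M i k j * (y j - piv (X i) β j)) ∘ (Y i) :=
      funext fun ω => hSeq i ω k
    rw [h]; exact (hfmeas i k).comp (hmeas i)
  have hSbd : ∀ i ω k, |S i ω k| ≤ c i k := by
    intro i ω k
    rw [hSeq]
    refine (Finset.abs_sum_le_sum_abs _ _).trans (Finset.sum_le_sum fun j _ => ?_)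
    rw [abs_mul]
    exact mul_le_of_le_one_right (abs_nonneg _) (hZbd i ω j)
  have hSSint : ∀ i i' k, Integrable (fun ω => S i ω k * S i' ω k) Pn := by
    intro i i' k
    refine (integrable_const (c i k * c i' k)).mono'
      ((hSmeas i k).mul (hSmeas i' k)).aestronglyMeasurable (.of_forall fun ω => ?_)
    rw [Real.norm_eq_abs, abs_mul]
    exact mul_le_mul (hSbd i ω k) (hSbd i' ω k) (abs_nonneg _)
      ((abs_nonneg _).trans (hSbd i ω k))
  have hYint : ∀ i j, Integrable (fun ω => Y i ω j) Pn := fun i j =>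
    (integrable_const 1).mono' ((measurable_pi_apply j).comp (hmeas i)).aestronglyMeasurable
      (.of_forall fun ω => by rcases hbin i ω j with h | h <;> simp [h])
  have hSmean : ∀ i k, ∫ ω, S i ω k ∂Pn = 0 := by
    intro i k
    have h1 : (fun ω => S i ω k) =
        fun ω => ∑ j, M i k j * (Y i ω j - piv (X i) β j) := funext fun ω => hSeq i ω k
    have h2 := integral_finset_sum (μ := Pn) Finset.univ
      (f := fun (j : Fin m) ω => M i k j * (Y i ω j - piv (X i) β j))
      (fun j _ => ((hYint i j).sub (integrable_const _)).const_mul _)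
    rw [h1, h2]
    refine Finset.sum_eq_zero fun j _ => ?_
    rw [integral_const_mul, integral_sub (hYint i j) (integrable_const _), hmean i j,
      integral_const]
    simp
  have hoff : ∀ i i', i ≠ i' → ∀ k, ∫ ω, S i ω k * S i' ω k ∂Pn = 0 := by
    intro i i' hne k
    have hind : IndepFun (fun ω => S i ω k) (fun ω => S i' ω k) Pn := by
      have h := (hindep.indepFun hne).comp (hfmeas i k) (hfmeas i' k)
      have e1 : (fun y : Fin m → ℝ => ∑ j, M i k j * (y j - piv (X i) β j)) ∘ (Y i) =
          fun ω => S i ω k := funext fun ω => (hSeq i ω k).symm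
      have e2 : (fun y : Fin m → ℝ => ∑ j, M i' k j * (y j - piv (X i') β j)) ∘ (Y i') =
          fun ω => S i' ω k := funext fun ω => (hSeq i' ω k).symm
      rwa [e1, e2] at h
    have h2 := hind.integral_mul_eq_mul_integral (hSmeas i k).aestronglyMeasurable
      (hSmeas i' k).aestronglyMeasurable
    calc ∫ ω, S i ω k * S i' ω k ∂Pn
        = (∫ ω, S i ω k ∂Pn) * ∫ ω, S i' ω k ∂Pn := h2
      _ = 0 := by rw [hSmean i k]; ring
  have hsq : ∀ ω, vnorm (∑ i, S i ω) ^ 2 = ∑ k, (∑ i, S i ω k) ^ 2 := by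
    intro ω
    have h : vnorm (∑ i, S i ω) ^ 2 = ∑ k, ((∑ i, S i ω) k) ^ 2 := by
      rw [vnorm, Real.sq_sqrt (by positivity)]
    simpa [Finset.sum_apply] using h
  have hsumint : ∀ k, Integrable (fun ω => (∑ i, S i ω k) ^ 2) Pn := by
    intro k
    have h : (fun ω => (∑ i, S i ω k) ^ 2) =
        fun ω => ∑ i, ∑ i', S i ω k * S i' ω k := by
      funext ω; rw [sq, Finset.sum_mul_sum]
    rw [h]
    exact integrable_finset_sum _ fun i _ => integrable_finset_sum _ fun i' _ => hSSint i i' k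
  have hGfun : (fun ω => vnorm (∑ i, S i ω) ^ 2) = fun ω => ∑ k, (∑ i, S i ω k) ^ 2 :=
    funext hsq
  have hGmeas : Measurable (fun ω => vnorm (∑ i, S i ω) ^ 2) := by
    rw [hGfun]
    exact Finset.measurable_sum _ fun k _ =>
      (Finset.measurable_sum _ fun i _ => hSmeas i k).pow_const 2
  have hGint : Integrable (fun ω => vnorm (∑ i, S i ω) ^ 2) Pn := by
    rw [hGfun]
    exact integrable_finset_sum _ fun k _ => hsumint k
  refine ⟨?_, hGint, hGmeas⟩
  have hsqint : ∀ i, Integrable (fun ω => ∑ k, S i ω k ^ 2) Pn := by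
    intro i
    refine integrable_finset_sum _ fun k _ => ?_
    have h : (fun ω => S i ω k ^ 2) = fun ω => S i ω k * S i ω k := by
      funext ω; rw [sq]
    rw [h]; exact hSSint i i k
  have hEcalc : ∫ ω, vnorm (∑ i, S i ω) ^ 2 ∂Pn = ∑ i, ∫ ω, ∑ k, S i ω k ^ 2 ∂Pn := by
    calc ∫ ω, vnorm (∑ i, S i ω) ^ 2 ∂Pn
        = ∫ ω, ∑ k, (∑ i, S i ω k) ^ 2 ∂Pn := by rw [hGfun]
      _ = ∑ k, ∫ ω, (∑ i, S i ω k) ^ 2 ∂Pn := integral_finset_sum _ fun k _ => hsumint k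
      _ = ∑ k, ∑ i, ∫ ω, S i ω k ^ 2 ∂Pn := by
          refine Finset.sum_congr rfl fun k _ => ?_
          calc ∫ ω, (∑ i, S i ω k) ^ 2 ∂Pn
              = ∫ ω, ∑ i, ∑ i', S i ω k * S i' ω k ∂Pn := by
                congr 1; funext ω; rw [sq, Finset.sum_mul_sum]
            _ = ∑ i, ∑ i', ∫ ω, S i ω k * S i' ω k ∂Pn := by
                rw [integral_finset_sum _ fun i _ =>
                  integrable_finset_sum _ fun i' _ => hSSint i i' k]
                exact Finset.sum_congr rfl fun i _ =>
                  integral_finset_sum _ fun i' _ => hSSint i i' k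
            _ = ∑ i, ∫ ω, S i ω k ^ 2 ∂Pn := by
                refine Finset.sum_congr rfl fun i _ => ?_
                rw [Finset.sum_eq_single i (fun i' _ hne => hoff i i' hne.symm k)
                  (fun h => absurd (Finset.mem_univ i) h)]
                congr 1; funext ω; rw [sq]
      _ = ∑ i, ∑ k, ∫ ω, S i ω k ^ 2 ∂Pn := Finset.sum_comm
      _ = ∑ i, ∫ ω, ∑ k, S i ω k ^ 2 ∂Pn := by
          refine Finset.sum_congr rfl fun i _ => ?_
          exact (integral_finset_sum _ fun k _ => by
            have h : (fun ω => S i ω k ^ 2) = fun ω => S i ω k * S i ω k := by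
              funext ω; rw [sq]
            rw [h]; exact hSSint i i k).symm
  rw [hEcalc]
  have hper : ∀ i, ∫ ω, ∑ k, S i ω k ^ 2 ∂Pn ≤ K0 * (X i * (X i)ᵀ).trace := by
    intro i
    calc ∫ ω, ∑ k, S i ω k ^ 2 ∂Pn
        ≤ ∫ _ω, K0 * (X i * (X i)ᵀ).trace ∂Pn := by
          refine integral_mono (hsqint i) (integrable_const _) fun ω => ?_
          exact pointwise_bound (X i) W β (Y i ω) b1 b2 hb1 hb2
            (fun j => hZbd i ω j) (fun j => hA2 i j)
      _ = K0 * (X i * (X i)ᵀ).trace := by simp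
  calc ∑ i, ∫ ω, ∑ k, S i ω k ^ 2 ∂Pn
      ≤ ∑ i, K0 * (X i * (X i)ᵀ).trace := Finset.sum_le_sum fun i _ => hper i
    _ = K0 * (∑ i, X i * (X i)ᵀ).trace := by
        rw [Matrix.trace_sum, Finset.mul_sum]


end AuxLemmas

set_option maxHeartbeats 1600000

/-- second-moment bound for the ideal estimating function:
E‖S̄_n(β₀)‖² ≤ C·Tr(Σᵢ Xᵢ Xᵢᵀ) = O(n p_n), hence ‖S̄_n(β₀)‖ = O_p(√(n p_n)). -/
theorem gee_Sbar_second_moment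
    (m : ℕ) (hm : 0 < m) (p : ℕ → ℕ) (hp : ∀ n, 0 < p n)
    (Ω : ℕ → Type) [∀ n, MeasurableSpace (Ω n)]
    (P : ∀ n, Measure (Ω n)) [∀ n, IsProbabilityMeasure (P n)]
    (X : ∀ n, Fin n → Matrix (Fin m) (Fin (p n)) ℝ)
    (Y : ∀ n, Fin n → Ω n → Fin m → ℝ)
    (β0 : ∀ n, Fin (p n) → ℝ)
    (hmeas : ∀ n i, Measurable (Y n i))
    (hbin : ∀ n i ω j, Y n i ω j = 0 ∨ Y n i ω j = 1)
    (hindep : ∀ n, iIndepFun (fun i => Y n i) (P n))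
    (hmean : ∀ n (i : Fin n) j, ∫ ω, Y n i ω j ∂(P n) = piv (X n i) (β0 n) j)
    (R0 : Matrix (Fin m) (Fin m) ℝ) (hR0 : R0.PosDef)
    (hcorr : ∀ n (i : Fin n) j j',
      ∫ ω, eps (X n i) (β0 n) (Y n i ω) j * eps (X n i) (β0 n) (Y n i ω) j' ∂(P n) = R0 j j')
    (hA1 : ∃ C : ℝ, ∀ n (i : Fin n) j, vnorm (X n i j) ≤ C * Real.sqrt (p n))
    (b1 b2 : ℝ) (hb1 : 0 < b1) (hb2 : b2 < 1)
    (hA2 : ∀ n (i : Fin n) j, b1 ≤ piv (X n i) (β0 n) j ∧ piv (X n i) (β0 n) j ≤ b2)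
    (hA2c : ∀ n, ∃ B : Set (Fin (p n) → ℝ), IsCompact B ∧ β0 n ∈ interior B)
    (b3 b4 : ℝ) (hb3 : 0 < b3)
    (hA3 : ∀ n, 0 < n → ∀ v : Fin (p n) → ℝ,
      b3 * (∑ k, v k ^ 2) ≤ (n : ℝ)⁻¹ * (v ⬝ᵥ (∑ i, (X n i)ᵀ * X n i).mulVec v) ∧
      (n : ℝ)⁻¹ * (v ⬝ᵥ (∑ i, (X n i)ᵀ * X n i).mulVec v) ≤ b4 * (∑ k, v k ^ 2))
    (Rbar : Matrix (Fin m) (Fin m) ℝ) (hRbar : Rbar.PosDef) :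
    (∃ C : ℝ, 0 < C ∧ ∀ n,
        ∫ ω, vnorm (∑ i, Scluster (X n i) Rbar⁻¹ (β0 n) (Y n i ω)) ^ 2 ∂(P n) ≤
          C * (∑ i, X n i * (X n i)ᵀ).trace) ∧
    (∃ C' : ℝ, 0 < C' ∧ ∀ n,
        (∑ i : Fin n, X n i * (X n i)ᵀ).trace ≤ C' * (n * p n)) ∧
    IsBigOP P (fun n ω => vnorm (∑ i, Scluster (X n i) Rbar⁻¹ (β0 n) (Y n i ω)))
      (fun n => Real.sqrt ((n : ℝ) * p n)) := by
  classical
  obtain ⟨C0, hC0⟩ := hA1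
  set K0 : ℝ :=
    m * ((Real.sqrt (b1 * (1 - b2)))⁻¹ * (∑ j, ∑ j', |(Rbar⁻¹) j j'|)) ^ 2 with hK0d
  have hK00 : 0 ≤ K0 := by positivity
  have hEB := fun n => expectation_bound (P n) (X n) (Y n) (β0 n) Rbar⁻¹
    (hmeas n) (hbin n) (hindep n) (hmean n) b1 b2 hb1 hb2 (fun i j => hA2 n i j)
  have htr0 : ∀ n, (0:ℝ) ≤ (∑ i : Fin n, X n i * (X n i)ᵀ).trace := by
    intro n
    rw [Matrix.trace_sum]
    refine Finset.sum_nonneg fun i _ => ?_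
    rw [trace_XXt]; positivity
  have part1 : ∃ C : ℝ, 0 < C ∧ ∀ n,
      ∫ ω, vnorm (∑ i, Scluster (X n i) Rbar⁻¹ (β0 n) (Y n i ω)) ^ 2 ∂(P n) ≤
        C * (∑ i, X n i * (X n i)ᵀ).trace := by
    refine ⟨K0 + 1, by linarith, fun n => ?_⟩
    refine ((hEB n).1).trans ?_
    have := htr0 n
    nlinarith
  have part2 : ∃ C' : ℝ, 0 < C' ∧ ∀ n,
      (∑ i : Fin n, X n i * (X n i)ᵀ).trace ≤ C' * (n * p n) := by
    refine ⟨m * C0 ^ 2 + 1, by positivity, fun n => ?_⟩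
    have htri : ∀ i : Fin n, (X n i * (X n i)ᵀ).trace ≤ m * C0 ^ 2 * p n := by
      intro i
      rw [trace_XXt]
      have hrow : ∀ j, ∑ k, (X n i j k) ^ 2 ≤ C0 ^ 2 * p n := by
        intro j
        have h1 := hC0 n i j
        have h2 : vnorm (X n i j) ^ 2 = ∑ k, (X n i j k) ^ 2 := by
          rw [vnorm, Real.sq_sqrt (by positivity)]
        have h3 : (0:ℝ) ≤ vnorm (X n i j) := Real.sqrt_nonneg _
        have h4 : Real.sqrt ((p n : ℝ)) ^ 2 = (p n : ℝ) := Real.sq_sqrt (by positivity)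
        nlinarith [Real.sqrt_nonneg ((p n : ℝ))]
      calc ∑ j, ∑ k, (X n i j k) ^ 2 ≤ ∑ _j : Fin m, C0 ^ 2 * (p n : ℝ) :=
            Finset.sum_le_sum fun j _ => hrow j
        _ = m * (C0 ^ 2 * p n) := by simp [Finset.sum_const, nsmul_eq_mul]
        _ = m * C0 ^ 2 * p n := by ring
    have hn0 : (0:ℝ) ≤ (n : ℝ) := Nat.cast_nonneg n
    have hp0 : (0:ℝ) ≤ (p n : ℝ) := Nat.cast_nonneg _
    calc (∑ i : Fin n, X n i * (X n i)ᵀ).trace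
        = ∑ i : Fin n, (X n i * (X n i)ᵀ).trace := Matrix.trace_sum _ _
      _ ≤ ∑ _i : Fin n, ((m : ℝ) * C0 ^ 2 * p n) := Finset.sum_le_sum fun i _ => htri i
      _ = n * ((m : ℝ) * C0 ^ 2 * p n) := by simp [Finset.sum_const, nsmul_eq_mul]
      _ ≤ ((m : ℝ) * C0 ^ 2 + 1) * (n * p n) := by nlinarith
  obtain ⟨C1, hC1pos, hC1⟩ := part1
  obtain ⟨C2, hC2pos, hC2⟩ := part2
  refine ⟨⟨C1, hC1pos, hC1⟩, ⟨C2, hC2pos, hC2⟩, ?_⟩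
  intro ε hε
  obtain ⟨D, hDd⟩ : ∃ D : ℝ, D = Real.sqrt (C1 * C2 / ε) + 1 := ⟨_, rfl⟩
  have hD0 : 0 < D := by rw [hDd]; positivity
  have hDsq : C1 * C2 ≤ ε * D ^ 2 := by
    have hq : (0:ℝ) ≤ C1 * C2 / ε := by positivity
    have h1 : Real.sqrt (C1 * C2 / ε) ^ 2 = C1 * C2 / ε := Real.sq_sqrt hq
    have h2 : Real.sqrt (C1 * C2 / ε) ≤ D := by rw [hDd]; linarith
    have h3 : ε * (C1 * C2 / ε) = C1 * C2 := by field_simp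
    have h5 := mul_self_le_mul_self (Real.sqrt_nonneg (C1 * C2 / ε)) h2
    have h4 : C1 * C2 / ε ≤ D ^ 2 := by rw [← h1]; nlinarith
    nlinarith [mul_le_mul_of_nonneg_left h4 hε.le]
  refine ⟨D, hD0, ?_⟩
  filter_upwards [eventually_ge_atTop 1] with n hn
  have hnp : (0:ℝ) < (n : ℝ) * p n := by
    have h1 : (1:ℝ) ≤ (n : ℝ) := by exact_mod_cast hn
    have h2 : (0:ℝ) < (p n : ℝ) := by exact_mod_cast hp n
    nlinarith
  obtain ⟨g, hgd⟩ : ∃ g : Ω n → ℝ,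
      g = fun ω => vnorm (∑ i, Scluster (X n i) Rbar⁻¹ (β0 n) (Y n i ω)) ^ 2 := ⟨_, rfl⟩
  have hgmeas : Measurable g := hgd ▸ (hEB n).2.2
  have hgint : Integrable g (P n) := hgd ▸ (hEB n).2.1
  have hg0 : ∀ ω, 0 ≤ g ω := fun ω => by rw [hgd]; positivity
  have hsub : {ω | D * Real.sqrt ((n : ℝ) * p n) <
        |vnorm (∑ i, Scluster (X n i) Rbar⁻¹ (β0 n) (Y n i ω))|} ⊆
      {ω | ENNReal.ofReal (D ^ 2 * ((n : ℝ) * p n)) ≤ ENNReal.ofReal (g ω)} := by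
    intro ω hω
    simp only [Set.mem_setOf_eq] at hω ⊢
    have hv0 : 0 ≤ vnorm (∑ i, Scluster (X n i) Rbar⁻¹ (β0 n) (Y n i ω)) :=
      Real.sqrt_nonneg _
    rw [abs_of_nonneg hv0] at hω
    have ha0 : 0 ≤ D * Real.sqrt ((n : ℝ) * p n) := by positivity
    apply ENNReal.ofReal_le_ofReal
    have he : (D * Real.sqrt ((n : ℝ) * p n)) ^ 2 = D ^ 2 * ((n : ℝ) * p n) := by
      rw [mul_pow, Real.sq_sqrt hnp.le]
    simp only [hgd]
    nlinarith [mul_self_le_mul_self ha0 hω.le]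
  have hεne : ENNReal.ofReal (D ^ 2 * ((n : ℝ) * p n)) ≠ 0 :=
    ne_of_gt (ENNReal.ofReal_pos.mpr (by positivity))
  have hmark := meas_ge_le_lintegral_div (μ := P n)
    (f := fun ω => ENNReal.ofReal (g ω)) hgmeas.ennreal_ofReal.aemeasurable
    hεne ENNReal.ofReal_ne_top
  have hlin : ∫⁻ ω, ENNReal.ofReal (g ω) ∂(P n) = ENNReal.ofReal (∫ ω, g ω ∂(P n)) :=
    (ofReal_integral_eq_lintegral_ofReal hgint (.of_forall hg0)).symm
  calc P n {ω | D * Real.sqrt ((n : ℝ) * p n) <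
        |vnorm (∑ i, Scluster (X n i) Rbar⁻¹ (β0 n) (Y n i ω))|}
      ≤ P n {ω | ENNReal.ofReal (D ^ 2 * ((n : ℝ) * p n)) ≤ ENNReal.ofReal (g ω)} :=
        measure_mono hsub
    _ ≤ (∫⁻ ω, ENNReal.ofReal (g ω) ∂(P n)) / ENNReal.ofReal (D ^ 2 * ((n : ℝ) * p n)) :=
        hmark
    _ = ENNReal.ofReal (∫ ω, g ω ∂(P n)) / ENNReal.ofReal (D ^ 2 * ((n : ℝ) * p n)) := by
        rw [hlin]
    _ ≤ ENNReal.ofReal (C1 * C2 * ((n : ℝ) * p n)) /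
          ENNReal.ofReal (D ^ 2 * ((n : ℝ) * p n)) := by
        apply ENNReal.div_le_div_right
        apply ENNReal.ofReal_le_ofReal
        calc ∫ ω, g ω ∂(P n) ≤ C1 * (∑ i, X n i * (X n i)ᵀ).trace := by
              rw [hgd]; exact hC1 n
          _ ≤ C1 * (C2 * ((n : ℝ) * p n)) :=
              mul_le_mul_of_nonneg_left (hC2 n) hC1pos.le
          _ = C1 * C2 * ((n : ℝ) * p n) := by ring
    _ ≤ ENNReal.ofReal ε := by
        apply ENNReal.div_le_of_le_mul
        rw [← ENNReal.ofReal_mul hε.le]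
        apply ENNReal.ofReal_le_ofReal
        nlinarith
end
end

section
/- Under conditions (A1)–(A4), E[||Ē_{1n}(β_{n0})||_F²] = O(n p_n²), where Ē_{1n}(β_{n0}) = (1/2) Σ_{i=1}^n Σ_{j=1}^m (1 − 2π_{ij}(β_{n0})) ε_{ij}(β_{n0}) X_i^T A_i^{1/2}(β_{n0}) R̄^{-1} e_j e_j^T X_i; consequently sup over unit vectors b ∈ R^{p_n} of |b^T Ē_{1n}(β_{n0}) b| is O_p(√n · p_n). -/
open MeasureTheory ProbabilityTheory Filter Matrix
open scoped BigOperators ENNReal NNReal Topology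

noncomputable section

open GEE

namespace GEEAux

open GEE

lemma integrable_of_bdd {Ωt : Type} [MeasurableSpace Ωt] {P : Measure Ωt}
    [IsProbabilityMeasure P] {f : Ωt → ℝ} {B : ℝ}
    (hf : Measurable f) (hB : ∀ ω, |f ω| ≤ B) : Integrable f P :=
  Integrable.mono' (integrable_const B) hf.aestronglyMeasurable
    (Filter.Eventually.of_forall fun ω => by simpa [Real.norm_eq_abs] using hB ω)

lemma sq_sum_integral {Ωt : Type} [MeasurableSpace Ωt] (P : Measure Ωt)
    [IsProbabilityMeasure P] {n : ℕ} (f : Fin n → Ωt → ℝ)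
    (hmeas : ∀ i, Measurable (f i)) (B : Fin n → ℝ) (hbd : ∀ i ω, |f i ω| ≤ B i)
    (horth : ∀ i j, i ≠ j → ∫ ω, f i ω * f j ω ∂P = 0) :
    ∫ ω, (∑ i, f i ω) ^ 2 ∂P = ∑ i, ∫ ω, f i ω ^ 2 ∂P := by
  have hint : ∀ i j : Fin n, Integrable (fun ω => f i ω * f j ω) P := fun i j =>
    integrable_of_bdd ((hmeas i).mul (hmeas j)) (B := B i * B j) (fun ω => by
      calc |f i ω * f j ω| = |f i ω| * |f j ω| := abs_mul _ _
        _ ≤ B i * B j :=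
          mul_le_mul (hbd i ω) (hbd j ω) (abs_nonneg _) ((abs_nonneg _).trans (hbd i ω)))
  have h1 : ∀ ω : Ωt, (∑ i, f i ω) ^ 2 = ∑ i, ∑ j, f i ω * f j ω := fun ω => by
    rw [sq, Finset.sum_mul_sum]
  calc ∫ ω, (∑ i, f i ω) ^ 2 ∂P = ∫ ω, ∑ i, ∑ j, f i ω * f j ω ∂P := by simp_rw [h1]
    _ = ∑ i, ∑ j, ∫ ω, f i ω * f j ω ∂P := by
        rw [integral_finset_sum _ (fun i _ => integrable_finset_sum _ (fun j _ => hint i j))]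
        exact Finset.sum_congr rfl fun i _ => integral_finset_sum _ fun j _ => hint i j
    _ = ∑ i, ∫ ω, f i ω ^ 2 ∂P := Finset.sum_congr rfl fun i _ => by
        rw [Finset.sum_eq_single i (fun j _ hj => horth i j (Ne.symm hj)) (by simp)]
        simp_rw [sq]

lemma entry_formula {a b : ℕ} (X : Matrix (Fin a) (Fin b) ℝ) (d : Fin a → ℝ)
    (W : Matrix (Fin a) (Fin a) ℝ) (j : Fin a) (k l : Fin b) :
    (Xᵀ * Matrix.diagonal d * W * Matrix.single j j (1:ℝ) * X) k l
      = (∑ c, X c k * (d c * W c j)) * X j l := by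
  simp only [Matrix.mul_apply, Matrix.transpose_apply, Matrix.diagonal_apply,
    Matrix.single, Matrix.of_apply, mul_ite, ite_mul, mul_zero, zero_mul, mul_one,
    ite_and, Finset.sum_ite_eq, Finset.sum_ite_eq', Finset.mem_univ, if_true]
  rw [Finset.sum_mul]
  simp_rw [mul_assoc]
  rw [Finset.sum_mul]
  simp_rw [mul_assoc]

lemma eps_apply {a b : ℕ} (X : Matrix (Fin a) (Fin b) ℝ) (β : Fin b → ℝ)
    (y : Fin a → ℝ) (j : Fin a) :
    eps X β y j = (Real.sqrt (piv X β j * (1 - piv X β j)))⁻¹ * (y j - piv X β j) := by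
  simp [GEE.eps, GEE.Ainvhalf, Matrix.mulVec_diagonal]

/-- the deterministic coefficient vector. -/
def GV {a b : ℕ} (X : Matrix (Fin a) (Fin b) ℝ) (β : Fin b → ℝ)
    (W : Matrix (Fin a) (Fin a) ℝ) (j : Fin a) (k : Fin b) : ℝ :=
  ∑ c, X c k * (Real.sqrt (piv X β c * (1 - piv X β c)) * W c j)

def CF {a b : ℕ} (X : Matrix (Fin a) (Fin b) ℝ) (β : Fin b → ℝ)
    (W : Matrix (Fin a) (Fin a) ℝ) (j : Fin a) (k l : Fin b) : ℝ :=
  (2:ℝ)⁻¹ * (1 - 2 * piv X β j) * (Real.sqrt (piv X β j * (1 - piv X β j)))⁻¹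
    * GV X β W j k * X j l

def FC {a b : ℕ} (X : Matrix (Fin a) (Fin b) ℝ) (β : Fin b → ℝ)
    (W : Matrix (Fin a) (Fin a) ℝ) (k l : Fin b) (y : Fin a → ℝ) : ℝ :=
  ∑ j, CF X β W j k l * (y j - piv X β j)

lemma entry_formula' {a b : ℕ} (X : Matrix (Fin a) (Fin b) ℝ) (β : Fin b → ℝ)
    (W : Matrix (Fin a) (Fin a) ℝ) (j : Fin a) (k l : Fin b) :
    (Xᵀ * Ahalf X β * W * Matrix.single j j (1:ℝ) * X) k l = GV X β W j k * X j l :=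
  entry_formula X _ W j k l

lemma FC_measurable {a b : ℕ} (X : Matrix (Fin a) (Fin b) ℝ) (β : Fin b → ℝ)
    (W : Matrix (Fin a) (Fin a) ℝ) (k l : Fin b) : Measurable (FC X β W k l) :=
  Finset.measurable_sum _ fun j _ =>
    ((measurable_pi_apply j).sub measurable_const).const_mul _

lemma FC_bound {a b : ℕ} (X : Matrix (Fin a) (Fin b) ℝ) (β : Fin b → ℝ)
    (W : Matrix (Fin a) (Fin a) ℝ) (k l : Fin b) (y : Fin a → ℝ)
    {b1 b2 : ℝ} (hb1 : 0 < b1) (hb2 : b2 < 1)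
    (hπ : ∀ j, b1 ≤ piv X β j ∧ piv X β j ≤ b2)
    (hy : ∀ j, |y j - piv X β j| ≤ 1) :
    |FC X β W k l y| ≤ (Real.sqrt (b1 * (1 - b2)))⁻¹ * ∑ j, |GV X β W j k| * |X j l| := by
  have hsq : (0:ℝ) < Real.sqrt (b1 * (1 - b2)) :=
    Real.sqrt_pos.2 (by nlinarith)
  refine (Finset.abs_sum_le_sum_abs _ _).trans ?_
  rw [Finset.mul_sum]
  refine Finset.sum_le_sum fun j _ => ?_
  obtain ⟨h1, h2⟩ := hπ j
  have hπ01 : 0 < piv X β j ∧ piv X β j < 1 := ⟨lt_of_lt_of_le hb1 h1, lt_of_le_of_lt h2 hb2⟩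
  have hsqj : Real.sqrt (b1 * (1 - b2)) ≤ Real.sqrt (piv X β j * (1 - piv X β j)) :=
    Real.sqrt_le_sqrt (by nlinarith)
  have hinv : (Real.sqrt (piv X β j * (1 - piv X β j)))⁻¹ ≤ (Real.sqrt (b1 * (1 - b2)))⁻¹ :=
    inv_anti₀ hsq hsqj
  have hinv0 : (0:ℝ) ≤ (Real.sqrt (piv X β j * (1 - piv X β j)))⁻¹ := by positivity
  have h12 : |1 - 2 * piv X β j| ≤ 1 := by
    rw [abs_le]; constructor <;> nlinarith [hπ01.1, hπ01.2]
  calc |CF X β W j k l * (y j - piv X β j)|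
      = (2:ℝ)⁻¹ * |1 - 2 * piv X β j| * (Real.sqrt (piv X β j * (1 - piv X β j)))⁻¹
          * |GV X β W j k| * |X j l| * |y j - piv X β j| := by
        unfold CF
        rw [abs_mul, abs_mul, abs_mul, abs_mul, abs_mul,
          abs_of_nonneg hinv0, abs_of_nonneg (by norm_num : (0:ℝ) ≤ (2:ℝ)⁻¹)]
    _ ≤ (Real.sqrt (b1 * (1 - b2)))⁻¹ * (|GV X β W j k| * |X j l|) := by
        have hb : (2:ℝ)⁻¹ * |1 - 2 * piv X β j| * (Real.sqrt (piv X β j * (1 - piv X β j)))⁻¹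
            ≤ (Real.sqrt (b1 * (1 - b2)))⁻¹ := by
          nlinarith [abs_nonneg (1 - 2 * piv X β j), inv_nonneg.2 hsq.le]
        have := mul_le_mul hb (hy j) (abs_nonneg _) (inv_nonneg.2 hsq.le)
        nlinarith [abs_nonneg (GV X β W j k), abs_nonneg (X j l),
          mul_nonneg (abs_nonneg (GV X β W j k)) (abs_nonneg (X j l)),
          abs_nonneg (y j - piv X β j),
          mul_nonneg (mul_nonneg (by norm_num : (0:ℝ) ≤ (2:ℝ)⁻¹)
            (abs_nonneg (1 - 2 * piv X β j))) hinv0]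
    _ = (Real.sqrt (b1 * (1 - b2)))⁻¹ * (|GV X β W j k| * |X j l|) := rfl

lemma GV_sq_sum {a b : ℕ} (X : Matrix (Fin a) (Fin b) ℝ) (β : Fin b → ℝ)
    (W : Matrix (Fin a) (Fin a) ℝ) (j : Fin a) {r Cx pn : ℝ}
    (hW : ∀ c j', |W c j'| ≤ r)
    (hrow : ∀ c, ∑ l, X c l ^ 2 ≤ Cx * pn)
    (hπ : ∀ c, 0 ≤ piv X β c ∧ piv X β c ≤ 1) :
    ∑ k, GV X β W j k ^ 2 ≤ (a:ℝ)^2 * (r^2 * (Cx * pn)) := by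
  have hterm : ∀ c (k : Fin b),
      (X c k * (Real.sqrt (piv X β c * (1 - piv X β c)) * W c j))^2 ≤ r^2 * X c k ^2 := by
    intro c k
    have hw := abs_le.mp (hW c j)
    have h1 : (W c j)^2 ≤ r^2 := by nlinarith
    have h0 : 0 ≤ piv X β c * (1 - piv X β c) := by nlinarith [(hπ c).1, (hπ c).2]
    have h2 : (Real.sqrt (piv X β c * (1 - piv X β c)))^2 ≤ 1 := by
      rw [Real.sq_sqrt h0]; nlinarith [(hπ c).1, (hπ c).2]
    rw [mul_pow, mul_pow]
    have h5 : (Real.sqrt (piv X β c * (1 - piv X β c)))^2 * (W c j)^2 ≤ r^2 := by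
      nlinarith [sq_nonneg (W c j), sq_nonneg (Real.sqrt (piv X β c * (1 - piv X β c)))]
    nlinarith [sq_nonneg (X c k)]
  have hstep : ∀ k : Fin b, GV X β W j k ^2 ≤ (a:ℝ) * ∑ c, r^2 * X c k ^2 := by
    intro k
    calc GV X β W j k ^2
        ≤ (a:ℝ) * ∑ c, (X c k * (Real.sqrt (piv X β c * (1 - piv X β c)) * W c j))^2 := by
          have := sq_sum_le_card_mul_sum_sq (s := (Finset.univ : Finset (Fin a)))
            (f := fun c => X c k * (Real.sqrt (piv X β c * (1 - piv X β c)) * W c j))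
          simpa [GV] using this
      _ ≤ (a:ℝ) * ∑ c, r^2 * X c k ^2 := by
          gcongr with c hc
          exact hterm c k
  calc ∑ k, GV X β W j k ^2
      ≤ ∑ k, (a:ℝ) * ∑ c, r^2 * X c k^2 := Finset.sum_le_sum fun k _ => hstep k
    _ = (a:ℝ) * ∑ c, ∑ k, r^2 * X c k ^2 := by rw [← Finset.mul_sum, Finset.sum_comm]
    _ ≤ (a:ℝ) * ∑ c, r^2 * (Cx * pn) := by
        gcongr with c hc
        rw [← Finset.mul_sum]
        exact mul_le_mul_of_nonneg_left (hrow c) (sq_nonneg r)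
    _ = (a:ℝ)^2 * (r^2 * (Cx*pn)) := by
        rw [Finset.sum_const, Finset.card_univ, Fintype.card_fin, nsmul_eq_mul]; ring

lemma FC_sq_sum {a b : ℕ} (X : Matrix (Fin a) (Fin b) ℝ) (β : Fin b → ℝ)
    (W : Matrix (Fin a) (Fin a) ℝ) (y : Fin a → ℝ)
    {b1 b2 r Cx pn : ℝ} (hb1 : 0 < b1) (hb2 : b2 < 1)
    (hπ : ∀ j, b1 ≤ piv X β j ∧ piv X β j ≤ b2)
    (hy : ∀ j, |y j - piv X β j| ≤ 1)
    (hW : ∀ c j', |W c j'| ≤ r)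
    (hrow : ∀ c, ∑ l, X c l ^ 2 ≤ Cx * pn) :
    ∑ k, ∑ l, FC X β W k l y ^ 2
      ≤ ((Real.sqrt (b1*(1-b2)))⁻¹)^2 * ((a:ℝ)^4 * (r^2 * ((Cx*pn)^2))) := by
  have hFCb : ∀ k l : Fin b, |FC X β W k l y|
      ≤ (Real.sqrt (b1 * (1 - b2)))⁻¹ * ∑ j, |GV X β W j k| * |X j l| := fun k l =>
    FC_bound X β W k l y hb1 hb2 hπ hy
  set c0 := (Real.sqrt (b1*(1-b2)))⁻¹ with hc0def
  have hc0 : 0 ≤ c0 := by positivity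
  have hπ01 : ∀ c, 0 ≤ piv X β c ∧ piv X β c ≤ 1 := fun c =>
    ⟨le_trans hb1.le (hπ c).1, le_trans (hπ c).2 hb2.le⟩
  have h12 : ∀ k l : Fin b, FC X β W k l y ^ 2
      ≤ c0^2 * ((a:ℝ) * ∑ j, GV X β W j k ^2 * X j l ^2) := by
    intro k l
    have hS : (∑ j, |GV X β W j k| * |X j l|)^2 ≤ (a:ℝ) * ∑ j, GV X β W j k^2 * X j l^2 := by
      have h := sq_sum_le_card_mul_sum_sq (s := (Finset.univ : Finset (Fin a)))
        (f := fun j => |GV X β W j k| * |X j l|)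
      simp only [Finset.card_univ, Fintype.card_fin] at h
      calc (∑ j, |GV X β W j k| * |X j l|)^2
          ≤ (a:ℝ) * ∑ j, (|GV X β W j k| * |X j l|)^2 := by exact_mod_cast h
        _ = (a:ℝ) * ∑ j, GV X β W j k^2 * X j l^2 := by
            congr 1; refine Finset.sum_congr rfl fun j _ => ?_
            rw [mul_pow, sq_abs, sq_abs]
    calc FC X β W k l y ^2 = |FC X β W k l y|^2 := (sq_abs _).symm
      _ ≤ (c0 * ∑ j, |GV X β W j k| * |X j l|)^2 :=
          pow_le_pow_left₀ (abs_nonneg _) (hFCb k l) 2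
      _ = c0^2 * (∑ j, |GV X β W j k| * |X j l|)^2 := by rw [mul_pow]
      _ ≤ c0^2 * ((a:ℝ) * ∑ j, GV X β W j k^2 * X j l^2) :=
          mul_le_mul_of_nonneg_left hS (sq_nonneg c0)
  have hre : ∑ k, ∑ l, ∑ j, GV X β W j k^2 * X j l^2
      = ∑ j, (∑ k, GV X β W j k^2) * (∑ l, X j l^2) := by
    simp_rw [Finset.sum_mul, Finset.mul_sum]
    calc ∑ k, ∑ l, ∑ j, GV X β W j k^2 * X j l^2
        = ∑ k, ∑ j, ∑ l, GV X β W j k^2 * X j l^2 :=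
          Finset.sum_congr rfl fun k _ => Finset.sum_comm
      _ = ∑ j, ∑ k, ∑ l, GV X β W j k^2 * X j l^2 := Finset.sum_comm
  calc ∑ k, ∑ l, FC X β W k l y ^2
      ≤ ∑ k, ∑ l, c0^2 * ((a:ℝ) * ∑ j, GV X β W j k^2 * X j l^2) :=
        Finset.sum_le_sum fun k _ => Finset.sum_le_sum fun l _ => h12 k l
    _ = c0^2 * ((a:ℝ) * ∑ k, ∑ l, ∑ j, GV X β W j k^2 * X j l^2) := by
        simp_rw [← Finset.mul_sum]
    _ = c0^2 * ((a:ℝ) * ∑ j, (∑ k, GV X β W j k^2) * (∑ l, X j l^2)) := by rw [hre]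
    _ ≤ c0^2 * ((a:ℝ) * ∑ j, ((a:ℝ)^2 * (r^2 * (Cx*pn))) * (Cx*pn)) := by
        refine mul_le_mul_of_nonneg_left
          (mul_le_mul_of_nonneg_left ?_ (Nat.cast_nonneg a)) (sq_nonneg c0)
        refine Finset.sum_le_sum fun j _ => ?_
        have hCxpn : 0 ≤ Cx * pn :=
          le_trans (Finset.sum_nonneg fun l _ => sq_nonneg _) (hrow j)
        exact mul_le_mul (GV_sq_sum X β W j hW hrow hπ01) (hrow j)
          (Finset.sum_nonneg fun l _ => sq_nonneg _)
          (by positivity)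
    _ = c0^2 * ((a:ℝ)^4 * (r^2 * ((Cx*pn)^2))) := by
        rw [Finset.sum_const, Finset.card_univ, Fintype.card_fin, nsmul_eq_mul]; ring

lemma rayleigh_le_fnorm {b : ℕ} (M : Matrix (Fin b) (Fin b) ℝ) (v : Fin b → ℝ)
    (hv : vnorm v = 1) : |v ⬝ᵥ M.mulVec v| ≤ fnorm M := by
  have h0 : (0:ℝ) ≤ ∑ i, v i ^2 := by positivity
  have hv2 : ∑ i, v i ^ 2 = 1 := by
    have h := hv; unfold vnorm at h
    nlinarith [Real.sq_sqrt h0]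
  have hdot : v ⬝ᵥ M.mulVec v = ∑ k, v k * (∑ l, M k l * v l) := by
    simp [dotProduct, Matrix.mulVec]
  have h1 : (v ⬝ᵥ M.mulVec v)^2 ≤ ∑ k, (∑ l, M k l * v l)^2 := by
    rw [hdot]
    calc (∑ k, v k * (∑ l, M k l * v l))^2
        ≤ (∑ k, v k ^2) * (∑ k, (∑ l, M k l * v l)^2) :=
          Finset.sum_mul_sq_le_sq_mul_sq _ _ _
      _ = _ := by rw [hv2, one_mul]
  have h2 : ∀ k, (∑ l, M k l * v l)^2 ≤ ∑ l, M k l ^2 := fun k => by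
    calc (∑ l, M k l * v l)^2 ≤ (∑ l, M k l^2) * (∑ l, v l^2) :=
          Finset.sum_mul_sq_le_sq_mul_sq _ _ _
      _ = ∑ l, M k l ^2 := by rw [hv2, mul_one]
  have h3 : (v ⬝ᵥ M.mulVec v)^2 ≤ ∑ k, ∑ l, M k l^2 :=
    h1.trans (Finset.sum_le_sum fun k _ => h2 k)
  calc |v ⬝ᵥ M.mulVec v| = Real.sqrt ((v ⬝ᵥ M.mulVec v)^2) := (Real.sqrt_sq_eq_abs _).symm
    _ ≤ Real.sqrt (∑ k, ∑ l, M k l^2) := Real.sqrt_le_sqrt h3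
    _ = fnorm M := rfl

lemma vnorm_single {b : ℕ} (i : Fin b) : vnorm (Pi.single i (1:ℝ) : Fin b → ℝ) = 1 := by
  have h : ∑ k, (Pi.single i (1:ℝ) : Fin b → ℝ) k ^2 = 1 := by
    rw [Finset.sum_eq_single i]
    · simp
    · intro j _ hj; simp [Pi.single_apply, hj]
    · simp
  unfold vnorm; rw [h, Real.sqrt_one]

end GEEAux

open GEEAux


set_option maxHeartbeats 1000000 in
/-- Frobenius-norm second-moment bound for Ē₁ₙ(β₀) and the induced
O_p(√n·p_n) bound for its extreme Rayleigh quotients. -/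
theorem gee_E1n_bound
    (m : ℕ) (hm : 0 < m) (p : ℕ → ℕ) (hp : ∀ n, 0 < p n)
    (Ω : ℕ → Type) [∀ n, MeasurableSpace (Ω n)]
    (P : ∀ n, Measure (Ω n)) [∀ n, IsProbabilityMeasure (P n)]
    (X : ∀ n, Fin n → Matrix (Fin m) (Fin (p n)) ℝ)
    (Y : ∀ n, Fin n → Ω n → Fin m → ℝ)
    (β0 : ∀ n, Fin (p n) → ℝ)
    (hmeas : ∀ n i, Measurable (Y n i))
    (hbin : ∀ n i ω j, Y n i ω j = 0 ∨ Y n i ω j = 1)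
    (hindep : ∀ n, iIndepFun (fun i => Y n i) (P n))
    (hmean : ∀ n (i : Fin n) j, ∫ ω, Y n i ω j ∂(P n) = piv (X n i) (β0 n) j)
    (R0 : Matrix (Fin m) (Fin m) ℝ) (hR0 : R0.PosDef)
    (hcorr : ∀ n (i : Fin n) j j',
      ∫ ω, eps (X n i) (β0 n) (Y n i ω) j * eps (X n i) (β0 n) (Y n i ω) j' ∂(P n) = R0 j j')
    (hA1 : ∃ C : ℝ, ∀ n (i : Fin n) j, vnorm (X n i j) ≤ C * Real.sqrt (p n))
    (b1 b2 : ℝ) (hb1 : 0 < b1) (hb2 : b2 < 1)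
    (hA2 : ∀ n (i : Fin n) j, b1 ≤ piv (X n i) (β0 n) j ∧ piv (X n i) (β0 n) j ≤ b2)
    (hA2c : ∀ n, ∃ B : Set (Fin (p n) → ℝ), IsCompact B ∧ β0 n ∈ interior B)
    (b3 b4 : ℝ) (hb3 : 0 < b3)
    (hA3 : ∀ n, 0 < n → ∀ v : Fin (p n) → ℝ,
      b3 * (∑ k, v k ^ 2) ≤ (n : ℝ)⁻¹ * (v ⬝ᵥ (∑ i, (X n i)ᵀ * X n i).mulVec v) ∧
      (n : ℝ)⁻¹ * (v ⬝ᵥ (∑ i, (X n i)ᵀ * X n i).mulVec v) ≤ b4 * (∑ k, v k ^ 2))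
    (Rbar : Matrix (Fin m) (Fin m) ℝ) (hRbar : Rbar.PosDef) :
    ∀ E1 : ∀ n, Ω n → Matrix (Fin (p n)) (Fin (p n)) ℝ,
      (∀ n ω, E1 n ω = (1 / 2 : ℝ) • ∑ i, ∑ j,
        ((1 - 2 * piv (X n i) (β0 n) j) * eps (X n i) (β0 n) (Y n i ω) j) •
          ((X n i)ᵀ * Ahalf (X n i) (β0 n) * Rbar⁻¹ * Matrix.single j j (1 : ℝ) * X n i)) →
      (∃ C : ℝ, 0 < C ∧ ∀ n,
          ∫ ω, fnorm (E1 n ω) ^ 2 ∂(P n) ≤ C * (n * (p n : ℝ) ^ 2)) ∧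
      IsBigOP P (fun n ω => sSup {r : ℝ | ∃ b : Fin (p n) → ℝ,
          vnorm b = 1 ∧ r = |b ⬝ᵥ (E1 n ω).mulVec b|})
        (fun n => Real.sqrt n * p n) := by
  intro E1 hE1
  classical
  obtain ⟨C0, hC0⟩ := hA1
  set C' : ℝ := |C0| + 1 with hC'def
  have hC'pos : (0:ℝ) < C' := by rw [hC'def]; positivity
  have hC' : ∀ n (i : Fin n) (j : Fin m), vnorm (X n i j) ≤ C' * Real.sqrt (p n) := by
    intro n i j
    refine (hC0 n i j).trans ?_
    have h1 := Real.sqrt_nonneg (p n : ℝ)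
    have h2 := le_abs_self C0
    rw [hC'def]; nlinarith
  have hrow : ∀ n (i : Fin n) (j : Fin m), ∑ l, X n i j l ^ 2 ≤ C'^2 * (p n : ℝ) := by
    intro n i j
    have h0 : (0:ℝ) ≤ ∑ l, X n i j l ^2 := by positivity
    have h := hC' n i j
    unfold vnorm at h
    have h2 : (Real.sqrt (∑ l, X n i j l ^2))^2 ≤ (C' * Real.sqrt (p n))^2 :=
      pow_le_pow_left₀ (Real.sqrt_nonneg _) h 2
    rw [Real.sq_sqrt h0, mul_pow, Real.sq_sqrt (Nat.cast_nonneg _)] at h2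
    exact h2
  set r : ℝ := 1 + ∑ c : Fin m, ∑ j' : Fin m, |Rbar⁻¹ c j'| with hrdef
  have hrpos : 0 < r := by
    rw [hrdef]
    have : (0:ℝ) ≤ ∑ c : Fin m, ∑ j' : Fin m, |Rbar⁻¹ c j'| :=
      Finset.sum_nonneg fun _ _ => Finset.sum_nonneg fun _ _ => abs_nonneg _
    linarith
  have hWbd : ∀ (c j' : Fin m), |Rbar⁻¹ c j'| ≤ r := by
    intro c j'
    have h1 : |Rbar⁻¹ c j'| ≤ ∑ j'' : Fin m, |Rbar⁻¹ c j''| :=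
      Finset.single_le_sum (f := fun j'' => |Rbar⁻¹ c j''|)
        (fun x _ => abs_nonneg _) (Finset.mem_univ j')
    have h2 : ∑ j'' : Fin m, |Rbar⁻¹ c j''| ≤ ∑ c' : Fin m, ∑ j'' : Fin m, |Rbar⁻¹ c' j''| :=
      Finset.single_le_sum (f := fun c' => ∑ j'' : Fin m, |Rbar⁻¹ c' j''|)
        (fun x _ => Finset.sum_nonneg fun _ _ => abs_nonneg _) (Finset.mem_univ c)
    rw [hrdef]; linarith
  have hb1b2 : 0 < b1 * (1 - b2) := mul_pos hb1 (by linarith)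
  set c0 : ℝ := (Real.sqrt (b1 * (1 - b2)))⁻¹ with hc0def
  have hc0pos : 0 < c0 := by rw [hc0def]; exact inv_pos.2 (Real.sqrt_pos.2 hb1b2)
  set D : ℝ := c0^2 * ((m:ℝ)^4 * (r^2 * (C'^2)^2)) with hDdef
  have hmR : (0:ℝ) < (m:ℝ) := by exact_mod_cast hm
  have hDpos : 0 < D := by
    rw [hDdef]
    exact mul_pos (pow_pos hc0pos 2) (mul_pos (pow_pos hmR 4)
      (mul_pos (pow_pos hrpos 2) (pow_pos (pow_pos hC'pos 2) 2)))
  have hylem : ∀ n (i : Fin n) ω (j : Fin m),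
      |Y n i ω j - piv (X n i) (β0 n) j| ≤ 1 := by
    intro n i ω j
    obtain ⟨h1, h2⟩ := hA2 n i j
    rcases hbin n i ω j with h | h <;> rw [h, abs_le] <;> constructor <;> nlinarith
  have hEntry : ∀ n ω (k l : Fin (p n)),
      E1 n ω k l = ∑ i, FC (X n i) (β0 n) Rbar⁻¹ k l (Y n i ω) := by
    intro n ω k l
    rw [hE1 n ω]
    simp only [Matrix.smul_apply, Matrix.sum_apply, smul_eq_mul, Finset.mul_sum]
    refine Finset.sum_congr rfl fun i _ => ?_
    refine Finset.sum_congr rfl fun j _ => ?_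
    rw [entry_formula', eps_apply]
    unfold CF
    ring
  have hFmeas : ∀ n (i : Fin n) (k l : Fin (p n)),
      Measurable (fun ω => FC (X n i) (β0 n) Rbar⁻¹ k l (Y n i ω)) :=
    fun n i k l => (FC_measurable _ _ _ k l).comp (hmeas n i)
  have hFbd : ∀ n (i : Fin n) (k l : Fin (p n)) ω,
      |FC (X n i) (β0 n) Rbar⁻¹ k l (Y n i ω)|
        ≤ c0 * ∑ j, |GV (X n i) (β0 n) Rbar⁻¹ j k| * |X n i j l| := by
    intro n i k l ω
    rw [hc0def]
    exact FC_bound _ _ _ k l _ hb1 hb2 (fun j => hA2 n i j) (fun j => hylem n i ω j)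
  have hYint : ∀ n (i : Fin n) (j : Fin m), Integrable (fun ω => Y n i ω j) (P n) := by
    intro n i j
    refine integrable_of_bdd (B := 1) ((measurable_pi_apply j).comp (hmeas n i)) fun ω => ?_
    rcases hbin n i ω j with h | h <;> rw [h] <;> norm_num
  have hFzero : ∀ n (i : Fin n) (k l : Fin (p n)),
      ∫ ω, FC (X n i) (β0 n) Rbar⁻¹ k l (Y n i ω) ∂(P n) = 0 := by
    intro n i k l
    unfold FC
    have hi : ∀ j : Fin m, Integrable (fun ω =>
        CF (X n i) (β0 n) Rbar⁻¹ j k l * (Y n i ω j - piv (X n i) (β0 n) j)) (P n) := by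
      intro j
      exact ((hYint n i j).sub (integrable_const _)).const_mul _
    rw [integral_finset_sum _ (fun j _ => hi j)]
    refine Finset.sum_eq_zero fun j _ => ?_
    rw [integral_const_mul, integral_sub (hYint n i j) (integrable_const _), integral_const]
    simp [hmean n i j]
  have hForth : ∀ n (k l : Fin (p n)) (i i' : Fin n), i ≠ i' →
      ∫ ω, FC (X n i) (β0 n) Rbar⁻¹ k l (Y n i ω)
        * FC (X n i') (β0 n) Rbar⁻¹ k l (Y n i' ω) ∂(P n) = 0 := by
    intro n k l i i' hne
    have hI : IndepFun (fun ω => FC (X n i) (β0 n) Rbar⁻¹ k l (Y n i ω))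
        (fun ω => FC (X n i') (β0 n) Rbar⁻¹ k l (Y n i' ω)) (P n) :=
      ((hindep n).indepFun hne).comp (FC_measurable _ _ _ k l) (FC_measurable _ _ _ k l)
    have hmul : ∫ ω, FC (X n i) (β0 n) Rbar⁻¹ k l (Y n i ω)
          * FC (X n i') (β0 n) Rbar⁻¹ k l (Y n i' ω) ∂(P n)
        = (∫ ω, FC (X n i) (β0 n) Rbar⁻¹ k l (Y n i ω) ∂(P n))
          * (∫ ω, FC (X n i') (β0 n) Rbar⁻¹ k l (Y n i' ω) ∂(P n)) :=
      hI.integral_mul_eq_mul_integral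
        (hFmeas n i k l).aestronglyMeasurable
        (hFmeas n i' k l).aestronglyMeasurable
    rw [hmul, hFzero n i k l, hFzero n i' k l, mul_zero]
  have hFCsq : ∀ n (i : Fin n) (y : Fin m → ℝ),
      (∀ j, |y j - piv (X n i) (β0 n) j| ≤ 1) →
      ∑ k, ∑ l, FC (X n i) (β0 n) Rbar⁻¹ k l y ^ 2 ≤ D * (p n : ℝ)^2 := by
    intro n i y hy
    have h := FC_sq_sum (X n i) (β0 n) Rbar⁻¹ y hb1 hb2 (fun j => hA2 n i j) hy hWbd
      (fun c => hrow n i c)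
    refine h.trans (le_of_eq ?_)
    rw [hDdef, hc0def]; ring
  have hE1meas : ∀ n (k l : Fin (p n)), Measurable (fun ω => E1 n ω k l) := by
    intro n k l
    have h : (fun ω => E1 n ω k l)
        = fun ω => ∑ i, FC (X n i) (β0 n) Rbar⁻¹ k l (Y n i ω) :=
      funext fun ω => hEntry n ω k l
    rw [h]
    exact Finset.measurable_sum _ fun i _ => hFmeas n i k l
  have hgbd : ∀ n ω (k l : Fin (p n)), (E1 n ω k l)^2
      ≤ (∑ i, c0 * ∑ j, |GV (X n i) (β0 n) Rbar⁻¹ j k| * |X n i j l|)^2 := by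
    intro n ω k l
    rw [hEntry n ω k l]
    calc (∑ i, FC (X n i) (β0 n) Rbar⁻¹ k l (Y n i ω))^2
        = |∑ i, FC (X n i) (β0 n) Rbar⁻¹ k l (Y n i ω)|^2 := (sq_abs _).symm
      _ ≤ _ := by
          refine pow_le_pow_left₀ (abs_nonneg _) ?_ 2
          exact (Finset.abs_sum_le_sum_abs _ _).trans
            (Finset.sum_le_sum fun i _ => hFbd n i k l ω)
  have hE1sqint : ∀ n (k l : Fin (p n)), Integrable (fun ω => (E1 n ω k l)^2) (P n) := by
    intro n k l
    refine integrable_of_bdd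
      (B := (∑ i, c0 * ∑ j, |GV (X n i) (β0 n) Rbar⁻¹ j k| * |X n i j l|)^2)
      ((hE1meas n k l).pow_const 2) (fun ω => ?_)
    rw [abs_of_nonneg (sq_nonneg _)]
    exact hgbd n ω k l
  have hpart1 : ∀ n, ∫ ω, ∑ k, ∑ l, (E1 n ω k l)^2 ∂(P n) ≤ D * ((n:ℝ) * (p n:ℝ)^2) := by
    intro n
    have hswap : ∫ ω, ∑ k, ∑ l, (E1 n ω k l)^2 ∂(P n)
        = ∑ k, ∑ l, ∫ ω, (E1 n ω k l)^2 ∂(P n) := by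
      rw [integral_finset_sum _ (fun k _ => integrable_finset_sum _ fun l _ => hE1sqint n k l)]
      exact Finset.sum_congr rfl fun k _ => integral_finset_sum _ fun l _ => hE1sqint n k l
    have hiter : ∀ (k l : Fin (p n)), ∫ ω, (E1 n ω k l)^2 ∂(P n)
        = ∑ i, ∫ ω, FC (X n i) (β0 n) Rbar⁻¹ k l (Y n i ω)^2 ∂(P n) := by
      intro k l
      have h1 : (fun ω => (E1 n ω k l)^2)
          = fun ω => (∑ i, FC (X n i) (β0 n) Rbar⁻¹ k l (Y n i ω))^2 :=
        funext fun ω => by rw [hEntry n ω k l]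
      rw [h1]
      exact sq_sum_integral (P n) _ (fun i => hFmeas n i k l)
        (fun i => c0 * ∑ j, |GV (X n i) (β0 n) Rbar⁻¹ j k| * |X n i j l|)
        (fun i ω => hFbd n i k l ω) (fun i i' h => hForth n k l i i' h)
    have hFsqint : ∀ (i : Fin n) (k l : Fin (p n)),
        Integrable (fun ω => FC (X n i) (β0 n) Rbar⁻¹ k l (Y n i ω)^2) (P n) := by
      intro i k l
      refine integrable_of_bdd
        (B := (c0 * ∑ j, |GV (X n i) (β0 n) Rbar⁻¹ j k| * |X n i j l|)^2)
        ((hFmeas n i k l).pow_const 2) (fun ω => ?_)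
      rw [abs_of_nonneg (sq_nonneg _), ← sq_abs]
      exact pow_le_pow_left₀ (abs_nonneg _) (hFbd n i k l ω) 2
    calc ∫ ω, ∑ k, ∑ l, (E1 n ω k l)^2 ∂(P n)
        = ∑ k, ∑ l, ∑ i, ∫ ω, FC (X n i) (β0 n) Rbar⁻¹ k l (Y n i ω)^2 ∂(P n) := by
          rw [hswap]
          exact Finset.sum_congr rfl fun k _ => Finset.sum_congr rfl fun l _ => hiter k l
      _ = ∑ i, ∑ k, ∑ l, ∫ ω, FC (X n i) (β0 n) Rbar⁻¹ k l (Y n i ω)^2 ∂(P n) := by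
          calc ∑ k, ∑ l, ∑ i, ∫ ω, FC (X n i) (β0 n) Rbar⁻¹ k l (Y n i ω)^2 ∂(P n)
              = ∑ k, ∑ i, ∑ l, ∫ ω, FC (X n i) (β0 n) Rbar⁻¹ k l (Y n i ω)^2 ∂(P n) :=
                Finset.sum_congr rfl fun k _ => Finset.sum_comm
            _ = ∑ i, ∑ k, ∑ l, ∫ ω, FC (X n i) (β0 n) Rbar⁻¹ k l (Y n i ω)^2 ∂(P n) :=
                Finset.sum_comm
      _ = ∑ i, ∫ ω, ∑ k, ∑ l, FC (X n i) (β0 n) Rbar⁻¹ k l (Y n i ω)^2 ∂(P n) := by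
          refine Finset.sum_congr rfl fun i _ => ?_
          rw [integral_finset_sum _ (fun k _ =>
            integrable_finset_sum _ fun l _ => hFsqint i k l)]
          exact Finset.sum_congr rfl fun k _ =>
            (integral_finset_sum _ fun l _ => hFsqint i k l).symm
      _ ≤ ∑ _i : Fin n, D * (p n:ℝ)^2 := by
          refine Finset.sum_le_sum fun i _ => ?_
          calc ∫ ω, ∑ k, ∑ l, FC (X n i) (β0 n) Rbar⁻¹ k l (Y n i ω)^2 ∂(P n)
              ≤ ∫ _ω, D * (p n:ℝ)^2 ∂(P n) := integral_mono
                (integrable_finset_sum _ fun k _ =>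
                  integrable_finset_sum _ fun l _ => hFsqint i k l)
                (integrable_const _)
                (fun ω => hFCsq n i (Y n i ω) (fun j => hylem n i ω j))
            _ = D * (p n:ℝ)^2 := by simp
      _ = D * ((n:ℝ) * (p n:ℝ)^2) := by
          rw [Finset.sum_const, Finset.card_univ, Fintype.card_fin, nsmul_eq_mul]; ring
  have hfnorm_sq : ∀ n ω, fnorm (E1 n ω) ^ 2 = ∑ k, ∑ l, (E1 n ω k l)^2 := by
    intro n ω
    exact Real.sq_sqrt (by positivity)
  constructor
  · refine ⟨D, hDpos, fun n => ?_⟩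
    calc ∫ ω, fnorm (E1 n ω) ^ 2 ∂(P n)
        = ∫ ω, ∑ k, ∑ l, (E1 n ω k l)^2 ∂(P n) := by
          refine integral_congr_ae (Filter.Eventually.of_forall fun ω => ?_)
          exact hfnorm_sq n ω
      _ ≤ D * ((n:ℝ) * (p n:ℝ)^2) := hpart1 n
  · intro ε hε
    set Cr : ℝ := Real.sqrt ((D+1)/ε) + 1 with hCrdef
    have hCrpos : 0 < Cr := by
      rw [hCrdef]
      have := Real.sqrt_nonneg ((D+1)/ε)
      linarith
    refine ⟨Cr, hCrpos, ?_⟩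
    filter_upwards [Filter.eventually_ge_atTop 1] with n hn
    have hq : (0:ℝ) < (n:ℝ) * (p n:ℝ)^2 := by
      have h1 : (1:ℝ) ≤ (n:ℝ) := by exact_mod_cast hn
      have h2 : (0:ℝ) < (p n:ℝ) := by exact_mod_cast hp n
      nlinarith
    have hgnn : ∀ ω, (0:ℝ) ≤ ∑ k, ∑ l, (E1 n ω k l)^2 := fun ω => by positivity
    have hgint : Integrable (fun ω => ∑ k, ∑ l, (E1 n ω k l)^2) (P n) :=
      integrable_finset_sum _ fun k _ => integrable_finset_sum _ fun l _ => hE1sqint n k l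
    have hsub : {ω | Cr * (Real.sqrt n * (p n:ℝ)) < |sSup {r' : ℝ | ∃ b : Fin (p n) → ℝ,
          vnorm b = 1 ∧ r' = |b ⬝ᵥ (E1 n ω).mulVec b|}|}
        ⊆ {ω | Cr^2 * ((n:ℝ) * (p n:ℝ)^2) ≤ ∑ k, ∑ l, (E1 n ω k l)^2} := by
      intro ω hω
      simp only [Set.mem_setOf_eq] at hω ⊢
      have hbddS : BddAbove {r' : ℝ | ∃ b : Fin (p n) → ℝ,
          vnorm b = 1 ∧ r' = |b ⬝ᵥ (E1 n ω).mulVec b|} := by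
        refine ⟨fnorm (E1 n ω), fun x hx => ?_⟩
        obtain ⟨v, hv, rfl⟩ := hx
        exact rayleigh_le_fnorm _ _ hv
      have hZle : sSup {r' : ℝ | ∃ b : Fin (p n) → ℝ,
            vnorm b = 1 ∧ r' = |b ⬝ᵥ (E1 n ω).mulVec b|} ≤ fnorm (E1 n ω) := by
        refine Real.sSup_le (fun x hx => ?_) (Real.sqrt_nonneg _)
        obtain ⟨v, hv, rfl⟩ := hx
        exact rayleigh_le_fnorm _ _ hv
      have hmem : |(Pi.single (⟨0, hp n⟩ : Fin (p n)) (1:ℝ) : Fin (p n) → ℝ)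
            ⬝ᵥ (E1 n ω).mulVec (Pi.single (⟨0, hp n⟩ : Fin (p n)) (1:ℝ) : Fin (p n) → ℝ)|
          ∈ {r' : ℝ | ∃ b : Fin (p n) → ℝ, vnorm b = 1 ∧ r' = |b ⬝ᵥ (E1 n ω).mulVec b|} :=
        ⟨_, vnorm_single _, rfl⟩
      have hZnn : 0 ≤ sSup {r' : ℝ | ∃ b : Fin (p n) → ℝ,
            vnorm b = 1 ∧ r' = |b ⬝ᵥ (E1 n ω).mulVec b|} :=
        le_trans (abs_nonneg _) (le_csSup hbddS hmem)
      rw [abs_of_nonneg hZnn] at hω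
      have hlt : Cr * (Real.sqrt n * (p n:ℝ)) < fnorm (E1 n ω) := lt_of_lt_of_le hω hZle
      have hnn2 : (0:ℝ) ≤ Cr * (Real.sqrt n * (p n:ℝ)) := by positivity
      have hsq2 : (Cr * (Real.sqrt n * (p n:ℝ)))^2 ≤ fnorm (E1 n ω)^2 :=
        pow_le_pow_left₀ hnn2 hlt.le 2
      rw [hfnorm_sq n ω] at hsq2
      calc Cr^2 * ((n:ℝ) * (p n:ℝ)^2) = (Cr * (Real.sqrt n * (p n:ℝ)))^2 := by
            rw [mul_pow, mul_pow, Real.sq_sqrt (Nat.cast_nonneg n)]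
        _ ≤ ∑ k, ∑ l, (E1 n ω k l)^2 := hsq2
    refine le_trans (measure_mono hsub) ?_
    have hmar := mul_meas_ge_le_integral_of_nonneg
      (Filter.Eventually.of_forall hgnn) hgint (Cr^2 * ((n:ℝ) * (p n:ℝ)^2))
    have hintle : ∫ ω, ∑ k, ∑ l, (E1 n ω k l)^2 ∂(P n) ≤ D * ((n:ℝ) * (p n:ℝ)^2) :=
      hpart1 n
    have hCr2 : D + 1 ≤ ε * Cr^2 := by
      have h2 : (0:ℝ) ≤ (D+1)/ε := by positivity
      have h1 : Real.sqrt ((D+1)/ε) ≤ Cr := by rw [hCrdef]; linarith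
      have h3 : (D+1)/ε ≤ Cr^2 := by
        calc (D+1)/ε = Real.sqrt ((D+1)/ε)^2 := (Real.sq_sqrt h2).symm
          _ ≤ Cr^2 := pow_le_pow_left₀ (Real.sqrt_nonneg _) h1 2
      calc D+1 = ((D+1)/ε) * ε := by field_simp
        _ ≤ Cr^2 * ε := mul_le_mul_of_nonneg_right h3 hε.le
        _ = ε * Cr^2 := mul_comm _ _
    set x := (P n {ω | Cr^2 * ((n:ℝ) * (p n:ℝ)^2)
        ≤ ∑ k, ∑ l, (E1 n ω k l)^2}).toReal with hxdef
    have hx0 : 0 ≤ x := ENNReal.toReal_nonneg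
    have hkey : Cr^2 * ((n:ℝ) * (p n:ℝ)^2) * x ≤ D * ((n:ℝ) * (p n:ℝ)^2) :=
      le_trans hmar hintle
    have h5 : Cr^2 * x ≤ D := by
      have h' : (Cr^2 * x) * ((n:ℝ) * (p n:ℝ)^2) ≤ D * ((n:ℝ) * (p n:ℝ)^2) := by
        nlinarith [hkey]
      exact le_of_mul_le_mul_right h' hq
    have hxε : x ≤ ε := by
      nlinarith [pow_pos hCrpos 2, h5, hCr2, hx0]
    calc P n {ω | Cr^2 * ((n:ℝ) * (p n:ℝ)^2) ≤ ∑ k, ∑ l, (E1 n ω k l)^2}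
        = ENNReal.ofReal x := (ENNReal.ofReal_toReal (measure_ne_top _ _)).symm
      _ ≤ ENNReal.ofReal ε := ENNReal.ofReal_le_ofReal hxε
end
end

section
/- Under conditions (A1)–(A4), for any sequence of unit vectors α_n ∈ R^{p_n}, the quantities γ_{ni} = α_n^T M̄_n^{-1/2}(β_{n0}) X_i^T X_i M̄_n^{-1/2}(β_{n0}) α_n satisfy max_{1≤i≤n} γ_{ni} = O(p_n/n); in particular, if p_n/n → 0 then max_{1≤i≤n} γ_{ni} → 0 as n → ∞. -/
open MeasureTheory ProbabilityTheory Filter Matrix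
open scoped BigOperators ENNReal NNReal Topology

noncomputable section

open GEE

section Aux

lemma dot_conj {a b : ℕ} (D : Matrix (Fin a) (Fin b) ℝ) (B : Matrix (Fin a) (Fin a) ℝ)
    (w : Fin b → ℝ) :
    w ⬝ᵥ (Dᵀ * B * D).mulVec w = (D.mulVec w) ⬝ᵥ B.mulVec (D.mulVec w) := by
  rw [← mulVec_mulVec, ← mulVec_mulVec, dotProduct_mulVec, vecMul_transpose]

lemma dot_gram {a b : ℕ} (D : Matrix (Fin a) (Fin b) ℝ) (w : Fin b → ℝ) :
    w ⬝ᵥ (Dᵀ * D).mulVec w = ∑ j, (D.mulVec w j) ^ 2 := by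
  rw [← mulVec_mulVec, dotProduct_mulVec, vecMul_transpose]
  simp [dotProduct, sq]

lemma dot_sum_mulVec {a n : ℕ} (M : Fin n → Matrix (Fin a) (Fin a) ℝ) (w : Fin a → ℝ) :
    w ⬝ᵥ (∑ i, M i).mulVec w = ∑ i, w ⬝ᵥ (M i).mulVec w := by
  classical
  rw [show (∑ i, M i) = ∑ i ∈ Finset.univ, M i from rfl]
  induction (Finset.univ : Finset (Fin n)) using Finset.induction with
  | empty => simp [Matrix.zero_mulVec]
  | insert _ _ h ih => simp [Finset.sum_insert h, Matrix.add_mulVec, dotProduct_add, ih]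

lemma quad_lower_bound {m : ℕ} (hm : 0 < m) (B : Matrix (Fin m) (Fin m) ℝ)
    (hB : ∀ u : Fin m → ℝ, u ≠ 0 → 0 < u ⬝ᵥ B.mulVec u) :
    ∃ c : ℝ, 0 < c ∧ ∀ u : Fin m → ℝ, c * (∑ j, u j ^ 2) ≤ u ⬝ᵥ B.mulVec u := by
  classical
  set E := EuclideanSpace ℝ (Fin m)
  have hnormsq : ∀ u : E, ‖u‖ ^ 2 = ∑ j, (u : Fin m → ℝ) j ^ 2 := by
    intro u
    rw [EuclideanSpace.norm_eq, Real.sq_sqrt (by positivity)]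
    simp [sq_abs]
  have hf : Continuous fun u : E => (u : Fin m → ℝ) ⬝ᵥ B.mulVec u := by
    have : (fun u : E => (u : Fin m → ℝ) ⬝ᵥ B.mulVec u)
        = fun u : E => ∑ j, (EuclideanSpace.proj j u) * ∑ k, B j k * EuclideanSpace.proj k u := by
      funext u; simp [dotProduct, Matrix.mulVec]
    rw [this]
    exact continuous_finset_sum _ fun j _ =>
      ((EuclideanSpace.proj j).continuous.mul
        (continuous_finset_sum _ fun k _ =>
          continuous_const.mul (EuclideanSpace.proj (𝕜 := ℝ) k).continuous))
  have hsph : (Metric.sphere (0 : E) 1).Nonempty := by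
    haveI : Nontrivial E := by
      refine ⟨EuclideanSpace.single ⟨0, hm⟩ 1, 0, fun h => ?_⟩
      have := congrArg (fun x : E => x ⟨0, hm⟩) h
      simp at this
    exact NormedSpace.sphere_nonempty.2 zero_le_one
  obtain ⟨v, hv, hvmin⟩ := (isCompact_sphere (0 : E) 1).exists_isMinOn hsph hf.continuousOn
  have hvnorm : ‖v‖ = 1 := by simpa using hv
  have hvne : (v : Fin m → ℝ) ≠ 0 := by
    intro h
    have : ‖v‖ = 0 := by
      have : v = (0 : E) := by ext j; exact congrFun h j
      simp [this]
    rw [hvnorm] at this; norm_num at this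
  refine ⟨(v : Fin m → ℝ) ⬝ᵥ B.mulVec v, hB v hvne, fun u => ?_⟩
  by_cases hu : (u : Fin m → ℝ) = 0
  · simp [hu]
  · set c := (v : Fin m → ℝ) ⬝ᵥ B.mulVec v with hc
    set uE : E := WithLp.toLp 2 u
    have huE : uE ≠ 0 := by
      intro h; apply hu; funext j; exact congrFun (congrArg (fun x : E => (x : Fin m → ℝ)) h) j
    have ht : (0 : ℝ) < ‖uE‖ := norm_pos_iff.2 huE
    have hmem : (‖uE‖⁻¹ • uE) ∈ Metric.sphere (0 : E) 1 := by
      simp [norm_smul, abs_of_pos (inv_pos.2 ht), inv_mul_cancel₀ ht.ne']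
    have hle := hvmin hmem
    have hscale : ((‖uE‖⁻¹ • uE : E) : Fin m → ℝ) ⬝ᵥ B.mulVec ((‖uE‖⁻¹ • uE : E) : Fin m → ℝ)
        = ‖uE‖⁻¹ ^ 2 * ((u : Fin m → ℝ) ⬝ᵥ B.mulVec u) := by
      have hcoe : ((‖uE‖⁻¹ • uE : E) : Fin m → ℝ) = ‖uE‖⁻¹ • (u : Fin m → ℝ) := rfl
      rw [hcoe, Matrix.mulVec_smul, smul_dotProduct, dotProduct_smul]
      ring_nf
    have hle' : c ≤ ‖uE‖⁻¹ ^ 2 * ((u : Fin m → ℝ) ⬝ᵥ B.mulVec u) := by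
      calc c ≤ ((‖uE‖⁻¹ • uE : E) : Fin m → ℝ) ⬝ᵥ B.mulVec ((‖uE‖⁻¹ • uE : E) : Fin m → ℝ) := hle
        _ = _ := hscale
    have hsum : ∑ j, (u : Fin m → ℝ) j ^ 2 = ‖uE‖ ^ 2 := (hnormsq uE).symm
    rw [hsum]
    calc c * ‖uE‖ ^ 2 ≤ (‖uE‖⁻¹ ^ 2 * ((u : Fin m → ℝ) ⬝ᵥ B.mulVec u)) * ‖uE‖ ^ 2 :=
          mul_le_mul_of_nonneg_right hle' (by positivity)
      _ = (u : Fin m → ℝ) ⬝ᵥ B.mulVec u := by field_simp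

end Aux


/-- the quantities γ_ni = α_nᵀ M̄_n^{-1/2} XᵢᵀXᵢ M̄_n^{-1/2} α_n satisfy
max_i γ_ni = O(p_n/n), and hence tend to 0 when p_n/n → 0. -/
theorem gee_gamma_max_bound
    (m : ℕ) (hm : 0 < m) (p : ℕ → ℕ) (hp : ∀ n, 0 < p n)
    (X : ∀ n, Fin n → Matrix (Fin m) (Fin (p n)) ℝ)
    (β0 : ∀ n, Fin (p n) → ℝ)
    (hA1 : ∃ C : ℝ, ∀ n (i : Fin n) j, vnorm (X n i j) ≤ C * Real.sqrt (p n))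
    (b1 b2 : ℝ) (hb1 : 0 < b1) (hb2 : b2 < 1)
    (hA2 : ∀ n (i : Fin n) j, b1 ≤ piv (X n i) (β0 n) j ∧ piv (X n i) (β0 n) j ≤ b2)
    (b3 b4 : ℝ) (hb3 : 0 < b3)
    (hA3 : ∀ n, 0 < n → ∀ v : Fin (p n) → ℝ,
      b3 * (∑ k, v k ^ 2) ≤ (n : ℝ)⁻¹ * (v ⬝ᵥ (∑ i, (X n i)ᵀ * X n i).mulVec v) ∧
      (n : ℝ)⁻¹ * (v ⬝ᵥ (∑ i, (X n i)ᵀ * X n i).mulVec v) ≤ b4 * (∑ k, v k ^ 2))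
    (R0 : Matrix (Fin m) (Fin m) ℝ) (hR0 : R0.PosDef)
    (Rbar : Matrix (Fin m) (Fin m) ℝ) (hRbar : Rbar.PosDef)
    (Minvhalf : ∀ n, Matrix (Fin (p n)) (Fin (p n)) ℝ)
    (hM : ∀ n, 0 < n → (Minvhalf n).IsSymm ∧
      Minvhalf n * (∑ i, Mcluster (X n i) Rbar⁻¹ R0 (β0 n)) * Minvhalf n = 1)
    (α : ∀ n, Fin (p n) → ℝ) (hα : ∀ n, vnorm (α n) = 1) :
    (∃ C : ℝ, 0 < C ∧ ∀ n, 0 < n → ∀ i : Fin n,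
        α n ⬝ᵥ (Minvhalf n * ((X n i)ᵀ * X n i) * Minvhalf n).mulVec (α n) ≤
          C * ((p n : ℝ) / n)) ∧
    (Tendsto (fun n => (p n : ℝ) / n) atTop (𝓝 0) →
      Tendsto (fun n => sSup {r : ℝ | ∃ i : Fin n,
          r = α n ⬝ᵥ (Minvhalf n * ((X n i)ᵀ * X n i) * Minvhalf n).mulVec (α n)})
        atTop (𝓝 0)) := by
    classical
  obtain ⟨C0, hC0⟩ := hA1
  set C1 : ℝ := max C0 0 with hC1def
  have hC1 : 0 ≤ C1 := le_max_right _ _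
  have hrow : ∀ n (i : Fin n) j, ∑ k, (X n i j k) ^ 2 ≤ C1 ^ 2 * p n := by
    intro n i j
    have h1 : Real.sqrt (∑ k, (X n i j k) ^ 2) ≤ C1 * Real.sqrt (p n) := by
      refine le_trans (hC0 n i j) ?_
      exact mul_le_mul_of_nonneg_right (le_max_left _ _) (Real.sqrt_nonneg _)
    have h2 : (0:ℝ) ≤ ∑ k, (X n i j k) ^ 2 := by positivity
    calc ∑ k, (X n i j k) ^ 2 = Real.sqrt (∑ k, (X n i j k) ^ 2) ^ 2 := (Real.sq_sqrt h2).symm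
      _ ≤ (C1 * Real.sqrt (p n)) ^ 2 := by
          exact pow_le_pow_left₀ (Real.sqrt_nonneg _) h1 2
      _ = C1 ^ 2 * p n := by
          rw [mul_pow, Real.sq_sqrt (by positivity)]
  set W : Matrix (Fin m) (Fin m) ℝ := Rbar⁻¹ with hWdef
  have hW : W.PosDef := hRbar.inv
  have hWt : Wᵀ = W := by
    ext i j
    have h := congrFun (congrFun hW.isHermitian i) j
    simpa using h
  set B : Matrix (Fin m) (Fin m) ℝ := W * R0 * W with hBdef
  have hBpos : ∀ u : Fin m → ℝ, u ≠ 0 → 0 < u ⬝ᵥ B.mulVec u := by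
    intro u hu
    have hWu : W.mulVec u ≠ 0 := by
      intro h
      have h2 := hW.dotProduct_mulVec_pos hu
      rw [h] at h2
      simp at h2
    have hrw : u ⬝ᵥ B.mulVec u = (W.mulVec u) ⬝ᵥ R0.mulVec (W.mulVec u) := by
      have h := dot_conj W R0 u
      rw [hWt] at h
      exact h
    rw [hrw]
    have h := hR0.dotProduct_mulVec_pos hWu
    simpa using h
  obtain ⟨c0, hc0, hquad⟩ := quad_lower_bound hm B hBpos
  have h1b2 : (0:ℝ) < 1 - b2 := by linarith
  set c2 : ℝ := c0 * (b1 * (1 - b2)) with hc2def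
  have hc2 : 0 < c2 := mul_pos hc0 (mul_pos hb1 h1b2)
  -- per-cluster lower bound
  have hclus : ∀ n, ∀ (i : Fin n) (w : Fin (p n) → ℝ),
      c2 * (w ⬝ᵥ ((X n i)ᵀ * X n i).mulVec w) ≤
        w ⬝ᵥ (Mcluster (X n i) W R0 (β0 n)).mulVec w := by
    intro n i w
    have hMdec : Mcluster (X n i) W R0 (β0 n)
        = (Ahalf (X n i) (β0 n) * X n i)ᵀ * B * (Ahalf (X n i) (β0 n) * X n i) := by
      simp [Mcluster, hBdef, Matrix.transpose_mul, Ahalf, Matrix.diagonal_transpose,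
        Matrix.mul_assoc]
    rw [hMdec, dot_conj]
    have hu : (Ahalf (X n i) (β0 n) * X n i).mulVec w
        = (Ahalf (X n i) (β0 n)).mulVec ((X n i).mulVec w) := by
      rw [mulVec_mulVec]
    rw [hu]
    set y : Fin m → ℝ := (X n i).mulVec w with hy
    set u : Fin m → ℝ := (Ahalf (X n i) (β0 n)).mulVec y with hudef
    have hAy : ∀ j, u j ^ 2
        = (piv (X n i) (β0 n) j * (1 - piv (X n i) (β0 n) j)) * (y j) ^ 2 := by
      intro j
      have hpij := hA2 n i j
      have hnn : 0 ≤ piv (X n i) (β0 n) j * (1 - piv (X n i) (β0 n) j) := by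
        nlinarith [hpij.1, hpij.2]
      have huj : u j = Real.sqrt (piv (X n i) (β0 n) j * (1 - piv (X n i) (β0 n) j)) * y j := by
        simp [hudef, Ahalf, Matrix.mulVec_diagonal]
      rw [huj, mul_pow, Real.sq_sqrt hnn]
    have hsumge : b1 * (1 - b2) * (∑ j, (y j) ^ 2) ≤ ∑ j, u j ^ 2 := by
      rw [Finset.mul_sum]
      refine Finset.sum_le_sum fun j _ => ?_
      rw [hAy j]
      have hpij := hA2 n i j
      have hkey : b1 * (1 - b2) ≤ piv (X n i) (β0 n) j * (1 - piv (X n i) (β0 n) j) := by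
        nlinarith [hpij.1, hpij.2]
      exact mul_le_mul_of_nonneg_right hkey (sq_nonneg _)
    have hgram : w ⬝ᵥ ((X n i)ᵀ * X n i).mulVec w = ∑ j, (y j) ^ 2 := dot_gram (X n i) w
    calc c2 * (w ⬝ᵥ ((X n i)ᵀ * X n i).mulVec w)
        = c0 * (b1 * (1 - b2) * ∑ j, (y j) ^ 2) := by rw [hgram, hc2def]; ring
      _ ≤ c0 * (∑ j, u j ^ 2) := mul_le_mul_of_nonneg_left hsumge hc0.le
      _ ≤ u ⬝ᵥ B.mulVec u := hquad u
  -- the key bound, for each n > 0 and each i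
  have key : ∀ n, 0 < n → ∀ i : Fin n,
      0 ≤ α n ⬝ᵥ (Minvhalf n * ((X n i)ᵀ * X n i) * Minvhalf n).mulVec (α n) ∧
      α n ⬝ᵥ (Minvhalf n * ((X n i)ᵀ * X n i) * Minvhalf n).mulVec (α n) ≤
        ((m : ℝ) * C1 ^ 2 + 1) / (c2 * b3) * ((p n : ℝ) / n) := by
    intro n hn
    obtain ⟨hSsymm, hSM⟩ := hM n hn
    have hST : (Minvhalf n)ᵀ = Minvhalf n := hSsymm
    set w : Fin (p n) → ℝ := (Minvhalf n).mulVec (α n) with hw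
    have hn' : (0:ℝ) < n := by exact_mod_cast hn
    have hγ : ∀ i : Fin n, α n ⬝ᵥ (Minvhalf n * ((X n i)ᵀ * X n i) * Minvhalf n).mulVec (α n)
        = w ⬝ᵥ ((X n i)ᵀ * X n i).mulVec w := by
      intro i
      have h := dot_conj (Minvhalf n) ((X n i)ᵀ * X n i) (α n)
      rw [hST] at h
      exact h
    have hαα : α n ⬝ᵥ α n = 1 := by
      have h2 : ∑ k, (α n k) ^ 2 = 1 := by
        have h := hα n
        rw [vnorm] at h
        nlinarith [Real.sq_sqrt (show (0:ℝ) ≤ ∑ k, (α n k) ^ 2 by positivity), h]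
      simpa [dotProduct, pow_two] using h2
    have hMw : w ⬝ᵥ (∑ i, Mcluster (X n i) W R0 (β0 n)).mulVec w = 1 := by
      have h := dot_conj (Minvhalf n) (∑ i, Mcluster (X n i) W R0 (β0 n)) (α n)
      rw [hST, hSM, Matrix.one_mulVec, hαα] at h
      exact h.symm
    have hSw : c2 * (b3 * ((n : ℝ) * ∑ k, (w k) ^ 2)) ≤ 1 := by
      rw [← hMw, dot_sum_mulVec]
      have h3 : b3 * ((n : ℝ) * ∑ k, (w k) ^ 2) ≤ w ⬝ᵥ (∑ i, (X n i)ᵀ * X n i).mulVec w := by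
        have h4 := (hA3 n hn w).1
        calc b3 * ((n : ℝ) * ∑ k, (w k) ^ 2) = (n : ℝ) * (b3 * ∑ k, (w k) ^ 2) := by ring
          _ ≤ (n : ℝ) * ((n : ℝ)⁻¹ * (w ⬝ᵥ (∑ i, (X n i)ᵀ * X n i).mulVec w)) :=
              mul_le_mul_of_nonneg_left h4 hn'.le
          _ = w ⬝ᵥ (∑ i, (X n i)ᵀ * X n i).mulVec w := by field_simp
      calc c2 * (b3 * ((n : ℝ) * ∑ k, (w k) ^ 2))
          ≤ c2 * (w ⬝ᵥ (∑ i, (X n i)ᵀ * X n i).mulVec w) :=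
            mul_le_mul_of_nonneg_left h3 hc2.le
        _ = ∑ i, c2 * (w ⬝ᵥ ((X n i)ᵀ * X n i).mulVec w) := by
            rw [dot_sum_mulVec, Finset.mul_sum]
        _ ≤ ∑ i, w ⬝ᵥ (Mcluster (X n i) W R0 (β0 n)).mulVec w :=
            Finset.sum_le_sum fun i _ => hclus n i w
    have hdpos : (0:ℝ) < c2 * (b3 * n) := mul_pos hc2 (mul_pos hb3 hn')
    have hSw' : ∑ k, (w k) ^ 2 ≤ 1 / (c2 * (b3 * (n : ℝ))) := by
      rw [le_div_iff₀ hdpos]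
      calc (∑ k, (w k) ^ 2) * (c2 * (b3 * (n : ℝ)))
          = c2 * (b3 * ((n : ℝ) * ∑ k, (w k) ^ 2)) := by ring
        _ ≤ 1 := hSw
    intro i
    constructor
    · rw [hγ i, dot_gram]
      positivity
    · rw [hγ i, dot_gram]
      have hterm : ∀ j : Fin m, ((X n i).mulVec w j) ^ 2 ≤ (C1 ^ 2 * p n) * ∑ k, (w k) ^ 2 := by
        intro j
        have hdef : (X n i).mulVec w j = ∑ k, X n i j k * w k := rfl
        rw [hdef]
        calc (∑ k, X n i j k * w k) ^ 2
            ≤ (∑ k, (X n i j k) ^ 2) * ∑ k, (w k) ^ 2 :=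
              Finset.sum_mul_sq_le_sq_mul_sq Finset.univ _ _
          _ ≤ (C1 ^ 2 * p n) * ∑ k, (w k) ^ 2 :=
              mul_le_mul_of_nonneg_right (hrow n i j) (by positivity)
      calc ∑ j, ((X n i).mulVec w j) ^ 2
          ≤ ∑ _j : Fin m, (C1 ^ 2 * p n) * ∑ k, (w k) ^ 2 :=
            Finset.sum_le_sum fun j _ => hterm j
        _ = (m : ℝ) * ((C1 ^ 2 * p n) * ∑ k, (w k) ^ 2) := by
            simp [Finset.sum_const, Finset.card_univ, nsmul_eq_mul]
        _ ≤ (m : ℝ) * ((C1 ^ 2 * p n) * (1 / (c2 * (b3 * (n : ℝ))))) := by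
            refine mul_le_mul_of_nonneg_left ?_ (by positivity)
            exact mul_le_mul_of_nonneg_left hSw' (by positivity)
        _ = ((m : ℝ) * C1 ^ 2 * p n) / ((c2 * b3) * n) := by
            field_simp
        _ ≤ (((m : ℝ) * C1 ^ 2 + 1) * p n) / ((c2 * b3) * n) := by
            have hnum : (m : ℝ) * C1 ^ 2 * p n ≤ ((m : ℝ) * C1 ^ 2 + 1) * p n := by
              have hpn : (0:ℝ) ≤ p n := by positivity
              nlinarith
            have hden : (0:ℝ) < (c2 * b3) * n := mul_pos (mul_pos hc2 hb3) hn'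
            exact (div_le_div_iff_of_pos_right hden).2 hnum
        _ = ((m : ℝ) * C1 ^ 2 + 1) / (c2 * b3) * ((p n : ℝ) / n) := by
            field_simp
  have hCfpos : 0 < ((m : ℝ) * C1 ^ 2 + 1) / (c2 * b3) := by
    apply div_pos
    · positivity
    · exact mul_pos hc2 hb3
  constructor
  · exact ⟨_, hCfpos, fun n hn i => (key n hn i).2⟩
  · intro htend
    apply squeeze_zero' (g := fun n => ((m : ℝ) * C1 ^ 2 + 1) / (c2 * b3) * ((p n : ℝ) / n))
    · filter_upwards [eventually_gt_atTop 0] with n hn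
      have i0 : Fin n := ⟨0, hn⟩
      have hbdd : BddAbove {r : ℝ | ∃ i : Fin n,
          r = α n ⬝ᵥ (Minvhalf n * ((X n i)ᵀ * X n i) * Minvhalf n).mulVec (α n)} := by
        refine ⟨((m : ℝ) * C1 ^ 2 + 1) / (c2 * b3) * ((p n : ℝ) / n), ?_⟩
        rintro r ⟨i, rfl⟩
        exact (key n hn i).2
      exact le_trans (key n hn i0).1 (le_csSup hbdd ⟨i0, rfl⟩)
    · filter_upwards [eventually_gt_atTop 0] with n hn
      refine Real.sSup_le ?_ ?_
      · rintro r ⟨i, rfl⟩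
        exact (key n hn i).2
      · have hn' : (0:ℝ) < n := by exact_mod_cast hn
        positivity
    · have h := htend.const_mul (((m : ℝ) * C1 ^ 2 + 1) / (c2 * b3))
      simpa using h
end
end

section
/- Under conditions (A2)–(A4), there exist constants c_1, c_2 > 0 such that λ_min(M̄_n(β_{n0})) ≥ c_1 λ_min(Σ_{i=1}^n X_i^T X_i) and λ_max(H̄_n(β_{n0})) ≤ c_2 λ_max(Σ_{i=1}^n X_i^T X_i); consequently, Σ_n = H̄_n^{-1}(β_{n0}) M̄_n(β_{n0}) H̄_n^{-1}(β_{n0}) satisfies λ_min(Σ_n) ≥ λ_min(M̄_n(β_{n0})) / λ_max(H̄_n(β_{n0}))² ≥ C n^{-1} for some constant C > 0 and all sufficiently large n. -/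
open MeasureTheory ProbabilityTheory Filter Matrix
open scoped BigOperators ENNReal NNReal Topology

noncomputable section

open GEE


namespace GEEAux

open GEE

lemma sum_sq_nonneg {k : ℕ} (w : Fin k → ℝ) : 0 ≤ ∑ j, w j ^ 2 :=
  Finset.sum_nonneg fun _ _ => sq_nonneg _

lemma dot_congr {a b : ℕ} (B : Matrix (Fin a) (Fin b) ℝ) (Q : Matrix (Fin a) (Fin a) ℝ)
    (v : Fin b → ℝ) :
    v ⬝ᵥ (Bᵀ * Q * B).mulVec v = (B.mulVec v) ⬝ᵥ Q.mulVec (B.mulVec v) := by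
  rw [← Matrix.mulVec_mulVec, ← Matrix.mulVec_mulVec, Matrix.dotProduct_mulVec,
    Matrix.vecMul_transpose]

lemma dot_self_eq {a b : ℕ} (B : Matrix (Fin a) (Fin b) ℝ) (u : Fin b → ℝ) :
    (B.mulVec u) ⬝ᵥ (B.mulVec u) = u ⬝ᵥ (Bᵀ * B).mulVec u := by
  have h := dot_congr B 1 u
  rw [Matrix.mul_one] at h
  rw [h, Matrix.one_mulVec]

lemma dot_self_sq {k : ℕ} (u : Fin k → ℝ) : u ⬝ᵥ u = ∑ j, u j ^ 2 := by
  simp [dotProduct, sq]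

lemma quad_abs_bound {m : ℕ} (Q : Matrix (Fin m) (Fin m) ℝ) :
    ∃ C : ℝ, 0 < C ∧ ∀ w : Fin m → ℝ, |w ⬝ᵥ Q.mulVec w| ≤ C * ∑ j, w j ^ 2 := by
  refine ⟨(∑ j, ∑ k, |Q j k|) + 1, by positivity, fun w => ?_⟩
  set S := ∑ j, w j ^ 2 with hS
  have hSnn : 0 ≤ S := sum_sq_nonneg w
  have hsq : ∀ j, w j ^ 2 ≤ S := fun j =>
    Finset.single_le_sum (fun i _ => sq_nonneg (w i)) (Finset.mem_univ j)
  have h1 : w ⬝ᵥ Q.mulVec w = ∑ j, ∑ k, w j * (Q j k * w k) := by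
    simp [dotProduct, Matrix.mulVec, Finset.mul_sum]
  have habs : |w ⬝ᵥ Q.mulVec w| ≤ ∑ j, ∑ k, |Q j k| * S := by
    rw [h1]
    refine (Finset.abs_sum_le_sum_abs _ _).trans (Finset.sum_le_sum fun j _ => ?_)
    refine (Finset.abs_sum_le_sum_abs _ _).trans (Finset.sum_le_sum fun k _ => ?_)
    have h2 : |w j * (Q j k * w k)| = |Q j k| * |w j * w k| := by
      rw [abs_mul, abs_mul, abs_mul]; ring
    rw [h2]
    refine mul_le_mul_of_nonneg_left ?_ (abs_nonneg _)
    rw [abs_le]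
    constructor
    · nlinarith [sq_nonneg (w j + w k), hsq j, hsq k]
    · nlinarith [sq_nonneg (w j - w k), hsq j, hsq k]
  calc |w ⬝ᵥ Q.mulVec w| ≤ ∑ j, ∑ k, |Q j k| * S := habs
    _ = (∑ j, ∑ k, |Q j k|) * S := by rw [Finset.sum_mul]; congr 1; ext j; rw [Finset.sum_mul]
    _ ≤ ((∑ j, ∑ k, |Q j k|) + 1) * S := by
        refine mul_le_mul_of_nonneg_right (by linarith) hSnn

lemma quad_lower {m : ℕ} (hm : 0 < m) (Q : Matrix (Fin m) (Fin m) ℝ) (hQ : Q.PosDef) :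
    ∃ c : ℝ, 0 < c ∧ ∀ w : Fin m → ℝ, c * ∑ j, w j ^ 2 ≤ w ⬝ᵥ Q.mulVec w := by
  set K : Set (Fin m → ℝ) := {w | ∑ j, w j ^ 2 = 1} with hK
  have hg : Continuous fun w : Fin m → ℝ => w ⬝ᵥ Q.mulVec w := by
    simp only [dotProduct, Matrix.mulVec]
    continuity
  have hf : Continuous fun w : Fin m → ℝ => ∑ j, w j ^ 2 := by continuity
  have hclosed : IsClosed K := isClosed_eq hf continuous_const
  have hsub : K ⊆ Metric.closedBall 0 1 := by
    intro w hw
    rw [Metric.mem_closedBall, dist_zero_right]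
    refine (pi_norm_le_iff_of_nonneg zero_le_one).2 fun j => ?_
    rw [Real.norm_eq_abs, ← Real.sqrt_one, ← Real.sqrt_sq_eq_abs]
    refine Real.sqrt_le_sqrt ?_
    rw [← hw]
    exact Finset.single_le_sum (fun i _ => sq_nonneg (w i)) (Finset.mem_univ j)
  have hcomp : IsCompact K := (isCompact_closedBall _ _).of_isClosed_subset hclosed hsub
  have hne : K.Nonempty := by
    refine ⟨fun i => if i = ⟨0, hm⟩ then (1:ℝ) else 0, ?_⟩
    simp [hK, ite_pow, Finset.sum_ite_eq']
  obtain ⟨u0, hu0K, hmin⟩ := hcomp.exists_isMinOn hne hg.continuousOn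
  have hu0ne : u0 ≠ 0 := by
    intro h0
    rw [h0] at hu0K
    simp [hK] at hu0K
  have hc : 0 < u0 ⬝ᵥ Q.mulVec u0 := by
    have := hQ.dotProduct_mulVec_pos hu0ne
    simpa using this
  refine ⟨u0 ⬝ᵥ Q.mulVec u0, hc, fun w => ?_⟩
  set S := ∑ j, w j ^ 2 with hSdef
  rcases eq_or_lt_of_le (Finset.sum_nonneg fun i _ => sq_nonneg (w i)) with h0 | hpos
  · have hw0 : w = 0 := by
      funext j
      have := (Finset.sum_eq_zero_iff_of_nonneg (fun i _ => sq_nonneg (w i))).1 h0.symm j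
        (Finset.mem_univ j)
      exact pow_eq_zero_iff (n := 2) (by norm_num) |>.1 this
    have hS0 : S = 0 := hSdef.trans h0.symm
    rw [hS0, mul_zero, hw0]
    simp
  · set u : Fin m → ℝ := (Real.sqrt S)⁻¹ • w with hu
    have hsS : (0:ℝ) < Real.sqrt S := Real.sqrt_pos.2 hpos
    have huK : u ∈ K := by
      simp only [hK, Set.mem_setOf_eq, hu, Pi.smul_apply, smul_eq_mul, mul_pow]
      rw [← Finset.mul_sum, ← hSdef, inv_pow, Real.sq_sqrt hpos.le]
      exact inv_mul_cancel₀ hpos.ne'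
    have hle : u0 ⬝ᵥ Q.mulVec u0 ≤ u ⬝ᵥ Q.mulVec u := hmin huK
    have hval : u ⬝ᵥ Q.mulVec u = S⁻¹ * (w ⬝ᵥ Q.mulVec w) := by
      rw [hu, Matrix.mulVec_smul, smul_dotProduct, dotProduct_smul,
        smul_eq_mul, smul_eq_mul, ← mul_assoc, ← mul_inv, Real.mul_self_sqrt hpos.le]
    rw [hval] at hle
    have := mul_le_mul_of_nonneg_right hle hpos.le
    calc (u0 ⬝ᵥ Q.mulVec u0) * S ≤ S⁻¹ * (w ⬝ᵥ Q.mulVec w) * S := this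
      _ = w ⬝ᵥ Q.mulVec w := by
          rw [mul_comm, ← mul_assoc, mul_inv_cancel₀ (show S ≠ 0 from hpos.ne'), one_mul]

lemma dot_symm {k : ℕ} {H : Matrix (Fin k) (Fin k) ℝ} (hsymm : Hᵀ = H) (x y : Fin k → ℝ) :
    y ⬝ᵥ H.mulVec x = x ⬝ᵥ H.mulVec y := by
  conv_lhs => rw [Matrix.dotProduct_mulVec, ← hsymm, Matrix.vecMul_transpose]
  exact dotProduct_comm _ _

lemma cs_psd {k : ℕ} (H : Matrix (Fin k) (Fin k) ℝ) (hsymm : Hᵀ = H)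
    (hpsd : ∀ x : Fin k → ℝ, 0 ≤ x ⬝ᵥ H.mulVec x) (x y : Fin k → ℝ) :
    (x ⬝ᵥ H.mulVec y) ^ 2 ≤ (x ⬝ᵥ H.mulVec x) * (y ⬝ᵥ H.mulVec y) := by
  have hyx := dot_symm hsymm x y
  have hexp : ∀ t : ℝ, 0 ≤ (y ⬝ᵥ H.mulVec y) * (t * t) + (2 * (x ⬝ᵥ H.mulVec y)) * t
      + (x ⬝ᵥ H.mulVec x) := by
    intro t
    have h := hpsd (x + t • y)
    have heq : (x + t • y) ⬝ᵥ H.mulVec (x + t • y)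
        = (y ⬝ᵥ H.mulVec y) * (t * t) + (2 * (x ⬝ᵥ H.mulVec y)) * t + (x ⬝ᵥ H.mulVec x) := by
      rw [Matrix.mulVec_add, Matrix.mulVec_smul]
      simp only [dotProduct_add, add_dotProduct, dotProduct_smul,
        smul_dotProduct, smul_eq_mul]
      rw [hyx]
      ring
    linarith [heq ▸ h]
  have hd := discrim_le_zero hexp
  rw [discrim] at hd
  nlinarith [hd]

lemma unit_exists {b : ℕ} (hb : 0 < b) : ∃ v : Fin b → ℝ, vnorm v = 1 := by
  refine ⟨fun i => if i = ⟨0, hb⟩ then (1:ℝ) else 0, ?_⟩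
  rw [vnorm, show ∑ i : Fin b, (if i = (⟨0,hb⟩ : Fin b) then (1:ℝ) else 0)^2 = 1 from by
    simp [ite_pow, Finset.sum_ite_eq']]
  exact Real.sqrt_one

lemma unit_sum_sq {k : ℕ} {v : Fin k → ℝ} (h : vnorm v = 1) : ∑ j, v j ^ 2 = 1 := by
  have h2 := congrArg (· ^ 2) h
  simp only [vnorm] at h2
  rwa [Real.sq_sqrt (sum_sq_nonneg v), one_pow] at h2

lemma bddAbove_ray {b : ℕ} (M : Matrix (Fin b) (Fin b) ℝ) :
    BddAbove {r | ∃ v : Fin b → ℝ, vnorm v = 1 ∧ r = v ⬝ᵥ M.mulVec v} := by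
  obtain ⟨C, hC, hbd⟩ := quad_abs_bound M
  refine ⟨C, ?_⟩
  rintro r ⟨v, hv, rfl⟩
  calc v ⬝ᵥ M.mulVec v ≤ |v ⬝ᵥ M.mulVec v| := le_abs_self _
    _ ≤ C * ∑ j, v j ^ 2 := hbd v
    _ = C := by rw [unit_sum_sq hv, mul_one]

lemma bddBelow_ray {b : ℕ} (M : Matrix (Fin b) (Fin b) ℝ) :
    BddBelow {r | ∃ v : Fin b → ℝ, vnorm v = 1 ∧ r = v ⬝ᵥ M.mulVec v} := by
  obtain ⟨C, hC, hbd⟩ := quad_abs_bound M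
  refine ⟨-C, ?_⟩
  rintro r ⟨v, hv, rfl⟩
  have h1 := (abs_le.1 (hbd v)).1
  rw [unit_sum_sq hv, mul_one] at h1
  linarith

lemma lmin_le {b : ℕ} {M : Matrix (Fin b) (Fin b) ℝ} {v : Fin b → ℝ} (hv : vnorm v = 1) :
    lmin M ≤ v ⬝ᵥ M.mulVec v := csInf_le (bddBelow_ray M) ⟨v, hv, rfl⟩

lemma le_lmax {b : ℕ} {M : Matrix (Fin b) (Fin b) ℝ} {v : Fin b → ℝ} (hv : vnorm v = 1) :
    v ⬝ᵥ M.mulVec v ≤ lmax M := le_csSup (bddAbove_ray M) ⟨v, hv, rfl⟩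

lemma le_lmin {b : ℕ} (hb : 0 < b) {M : Matrix (Fin b) (Fin b) ℝ} {c : ℝ}
    (h : ∀ v : Fin b → ℝ, vnorm v = 1 → c ≤ v ⬝ᵥ M.mulVec v) : c ≤ lmin M := by
  obtain ⟨v0, hv0⟩ := unit_exists hb
  refine le_csInf ⟨_, ⟨v0, hv0, rfl⟩⟩ ?_
  rintro r ⟨v, hv, rfl⟩
  exact h v hv

lemma lmax_le {b : ℕ} (hb : 0 < b) {M : Matrix (Fin b) (Fin b) ℝ} {c : ℝ}
    (h : ∀ v : Fin b → ℝ, vnorm v = 1 → v ⬝ᵥ M.mulVec v ≤ c) : lmax M ≤ c := by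
  obtain ⟨v0, hv0⟩ := unit_exists hb
  refine csSup_le ⟨_, ⟨v0, hv0, rfl⟩⟩ ?_
  rintro r ⟨v, hv, rfl⟩
  exact h v hv

lemma sq_zero_vec {k : ℕ} {w : Fin k → ℝ} (h0 : (0:ℝ) = ∑ j, w j ^ 2) : w = 0 :=
  funext fun j => pow_eq_zero_iff (n := 2) (by norm_num) |>.1
    ((Finset.sum_eq_zero_iff_of_nonneg (fun i _ => sq_nonneg (w i))).1 h0.symm j
      (Finset.mem_univ j))

lemma lmin_quad {b : ℕ} (M : Matrix (Fin b) (Fin b) ℝ) (w : Fin b → ℝ) :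
    lmin M * ∑ j, w j ^ 2 ≤ w ⬝ᵥ M.mulVec w := by
  set S := ∑ j, w j ^ 2 with hSdef
  rcases eq_or_lt_of_le (Finset.sum_nonneg fun i _ => sq_nonneg (w i)) with h0 | hpos
  · have hS0 : S = 0 := hSdef.trans h0.symm
    rw [hS0, mul_zero, sq_zero_vec h0]
    simp
  · set u := (Real.sqrt S)⁻¹ • w with hu
    have hsum : ∑ j, u j ^ 2 = 1 := by
      simp only [hu, Pi.smul_apply, smul_eq_mul, mul_pow]
      rw [← Finset.mul_sum, ← hSdef, inv_pow, Real.sq_sqrt hpos.le]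
      exact inv_mul_cancel₀ hpos.ne'
    have hunit : vnorm u = 1 := by rw [vnorm, hsum, Real.sqrt_one]
    have hle : lmin M ≤ u ⬝ᵥ M.mulVec u := lmin_le hunit
    have hval : u ⬝ᵥ M.mulVec u = S⁻¹ * (w ⬝ᵥ M.mulVec w) := by
      rw [hu, Matrix.mulVec_smul, smul_dotProduct, dotProduct_smul,
        smul_eq_mul, smul_eq_mul, ← mul_assoc, ← mul_inv, Real.mul_self_sqrt hpos.le]
    rw [hval] at hle
    calc lmin M * S ≤ S⁻¹ * (w ⬝ᵥ M.mulVec w) * S := mul_le_mul_of_nonneg_right hle hpos.le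
      _ = w ⬝ᵥ M.mulVec w := by
          rw [mul_comm, ← mul_assoc, mul_inv_cancel₀ (show S ≠ 0 from hpos.ne'), one_mul]

lemma lmax_quad {b : ℕ} (M : Matrix (Fin b) (Fin b) ℝ) (w : Fin b → ℝ) :
    w ⬝ᵥ M.mulVec w ≤ lmax M * ∑ j, w j ^ 2 := by
  set S := ∑ j, w j ^ 2 with hSdef
  rcases eq_or_lt_of_le (Finset.sum_nonneg fun i _ => sq_nonneg (w i)) with h0 | hpos
  · have hS0 : S = 0 := hSdef.trans h0.symm
    rw [hS0, mul_zero, sq_zero_vec h0]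
    simp
  · set u := (Real.sqrt S)⁻¹ • w with hu
    have hsum : ∑ j, u j ^ 2 = 1 := by
      simp only [hu, Pi.smul_apply, smul_eq_mul, mul_pow]
      rw [← Finset.mul_sum, ← hSdef, inv_pow, Real.sq_sqrt hpos.le]
      exact inv_mul_cancel₀ hpos.ne'
    have hunit : vnorm u = 1 := by rw [vnorm, hsum, Real.sqrt_one]
    have hle : u ⬝ᵥ M.mulVec u ≤ lmax M := le_lmax hunit
    have hval : u ⬝ᵥ M.mulVec u = S⁻¹ * (w ⬝ᵥ M.mulVec w) := by
      rw [hu, Matrix.mulVec_smul, smul_dotProduct, dotProduct_smul,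
        smul_eq_mul, smul_eq_mul, ← mul_assoc, ← mul_inv, Real.mul_self_sqrt hpos.le]
    rw [hval] at hle
    calc w ⬝ᵥ M.mulVec w = S⁻¹ * (w ⬝ᵥ M.mulVec w) * S := by
          rw [mul_comm, ← mul_assoc, mul_inv_cancel₀ (show S ≠ 0 from hpos.ne'), one_mul]
      _ ≤ lmax M * S := mul_le_mul_of_nonneg_right hle hpos.le

lemma dot_sum {n b : ℕ} (M : Fin n → Matrix (Fin b) (Fin b) ℝ) (v : Fin b → ℝ) :
    v ⬝ᵥ (∑ i, M i).mulVec v = ∑ i, v ⬝ᵥ (M i).mulVec v := by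
  induction (Finset.univ : Finset (Fin n)) using Finset.induction with
  | empty => simp
  | insert _ _ h ih => simp [Finset.sum_insert h, Matrix.add_mulVec, dotProduct_add, ih]

lemma Ahalf_transpose {a b : ℕ} (Xi : Matrix (Fin a) (Fin b) ℝ) (β : Fin b → ℝ) :
    (Ahalf Xi β)ᵀ = Ahalf Xi β := Matrix.diagonal_transpose _

lemma Mcluster_eq {a b : ℕ} (Xi : Matrix (Fin a) (Fin b) ℝ) (W R : Matrix (Fin a) (Fin a) ℝ)
    (β : Fin b → ℝ) :
    Mcluster Xi W R β = (Ahalf Xi β * Xi)ᵀ * (W * R * W) * (Ahalf Xi β * Xi) := by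
  rw [Matrix.transpose_mul, Ahalf_transpose]
  simp only [GEE.Mcluster, Matrix.mul_assoc]

lemma Hcluster_eq {a b : ℕ} (Xi : Matrix (Fin a) (Fin b) ℝ) (W : Matrix (Fin a) (Fin a) ℝ)
    (β : Fin b → ℝ) :
    Hcluster Xi W β = (Ahalf Xi β * Xi)ᵀ * W * (Ahalf Xi β * Xi) := by
  rw [Matrix.transpose_mul, Ahalf_transpose]
  simp only [GEE.Hcluster, Matrix.mul_assoc]

lemma dot_mulVec_symm {k : ℕ} {W : Matrix (Fin k) (Fin k) ℝ} (hWt : Wᵀ = W)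
    (x z : Fin k → ℝ) : x ⬝ᵥ W.mulVec z = (W.mulVec x) ⬝ᵥ z := by
  rw [Matrix.dotProduct_mulVec]
  congr 1
  rw [← hWt, Matrix.vecMul_transpose, hWt]

lemma chain_low {c C a tz tw tu q : ℝ} (hc : 0 < c) (hC : 0 < C)
    (h1 : c * tu ≤ q) (h2 : tw ≤ C * tu) (h3 : a * tz ≤ tw) :
    c * a / C * tz ≤ q := by
  rw [div_mul_eq_mul_div, div_le_iff₀ hC]
  nlinarith [mul_le_mul_of_nonneg_left h3 hc.le, mul_le_mul_of_nonneg_left h2 hc.le,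
    mul_le_mul_of_nonneg_right h1 hC.le]

end GEEAux

open GEEAux

set_option maxHeartbeats 1600000 in
/-- eigenvalue bounds λ_min(M̄) ≥ c₁λ_min(ΣXᵀX), λ_max(H̄) ≤ c₂λ_max(ΣXᵀX),
and consequently λ_min(Σ_n) ≥ λ_min(M̄)/λ_max(H̄)² ≥ C n⁻¹ for large n. -/
theorem gee_Sigma_eigenvalue_bounds
    (m : ℕ) (hm : 0 < m) (p : ℕ → ℕ) (hp : ∀ n, 0 < p n)
    (X : ∀ n, Fin n → Matrix (Fin m) (Fin (p n)) ℝ)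
    (β0 : ∀ n, Fin (p n) → ℝ)
    (b1 b2 : ℝ) (hb1 : 0 < b1) (hb2 : b2 < 1)
    (hA2 : ∀ n (i : Fin n) j, b1 ≤ piv (X n i) (β0 n) j ∧ piv (X n i) (β0 n) j ≤ b2)
    (b3 b4 : ℝ) (hb3 : 0 < b3)
    (hA3 : ∀ n, 0 < n → ∀ v : Fin (p n) → ℝ,
      b3 * (∑ k, v k ^ 2) ≤ (n : ℝ)⁻¹ * (v ⬝ᵥ (∑ i, (X n i)ᵀ * X n i).mulVec v) ∧
      (n : ℝ)⁻¹ * (v ⬝ᵥ (∑ i, (X n i)ᵀ * X n i).mulVec v) ≤ b4 * (∑ k, v k ^ 2))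
    (R0 : Matrix (Fin m) (Fin m) ℝ) (hR0 : R0.PosDef)
    (Rbar : Matrix (Fin m) (Fin m) ℝ) (hRbar : Rbar.PosDef)
    (Sig : ∀ n, Matrix (Fin (p n)) (Fin (p n)) ℝ)
    (hSig : ∀ n, Sig n =
      (∑ i, Hcluster (X n i) Rbar⁻¹ (β0 n))⁻¹ *
        (∑ i, Mcluster (X n i) Rbar⁻¹ R0 (β0 n)) *
        (∑ i, Hcluster (X n i) Rbar⁻¹ (β0 n))⁻¹) :
    (∃ c1 : ℝ, 0 < c1 ∧ ∀ n,
        c1 * lmin (∑ i, (X n i)ᵀ * X n i) ≤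
          lmin (∑ i, Mcluster (X n i) Rbar⁻¹ R0 (β0 n))) ∧
    (∃ c2 : ℝ, 0 < c2 ∧ ∀ n,
        lmax (∑ i, Hcluster (X n i) Rbar⁻¹ (β0 n)) ≤
          c2 * lmax (∑ i, (X n i)ᵀ * X n i)) ∧
    (∀ n, 0 < n →
        lmin (∑ i, Mcluster (X n i) Rbar⁻¹ R0 (β0 n)) /
            lmax (∑ i, Hcluster (X n i) Rbar⁻¹ (β0 n)) ^ 2 ≤ lmin (Sig n)) ∧
    (∃ C : ℝ, 0 < C ∧ ∀ᶠ n : ℕ in atTop, C * (n : ℝ)⁻¹ ≤ lmin (Sig n)) := by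
  classical
  -- basic scalar facts
  have hpiv := hA2 1 ⟨0, Nat.one_pos⟩ ⟨0, hm⟩
  have hb1b2 : b1 ≤ b2 := le_trans hpiv.1 hpiv.2
  have hb1lt1 : b1 < 1 := lt_of_le_of_lt hb1b2 hb2
  have hb2pos : 0 < b2 := lt_of_lt_of_le hb1 hb1b2
  have hamin : (0:ℝ) < b1 * (1 - b2) := by nlinarith
  have hamax : (0:ℝ) < b2 * (1 - b1) := by nlinarith
  obtain ⟨cR0, hcR0, hR0low⟩ := quad_lower hm R0 hR0
  obtain ⟨CRb, hCRb, hRbup⟩ := quad_abs_bound (Rbarᵀ * Rbar)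
  obtain ⟨CW, hCW, hWup⟩ := quad_abs_bound (Rbar⁻¹)
  obtain ⟨cW, hcW, hWlow⟩ := quad_lower hm Rbar⁻¹ hRbar.inv
  have hRbt : Rbarᵀ = Rbar := by
    rw [← Matrix.conjTranspose_eq_transpose_of_trivial]
    exact hRbar.1
  have hWt : (Rbar⁻¹)ᵀ = Rbar⁻¹ := by
    rw [Matrix.transpose_nonsing_inv, hRbt]
  have hRbinv : Rbar * Rbar⁻¹ = 1 := Matrix.mul_nonsing_inv _ hRbar.det_pos.ne'.isUnit
  -- weighted norm bounds from (A2)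
  have hAbound : ∀ n (i : Fin n) (z : Fin m → ℝ),
      b1 * (1 - b2) * ∑ j, z j ^ 2 ≤ (∑ j, ((Ahalf (X n i) (β0 n)).mulVec z j) ^ 2) ∧
      (∑ j, ((Ahalf (X n i) (β0 n)).mulVec z j) ^ 2) ≤ b2 * (1 - b1) * ∑ j, z j ^ 2 := by
    intro n i z
    have hval : ∀ j, ((Ahalf (X n i) (β0 n)).mulVec z j) ^ 2
        = (piv (X n i) (β0 n) j * (1 - piv (X n i) (β0 n) j)) * z j ^ 2 := by
      intro j
      have h := hA2 n i j
      have hnn : 0 ≤ piv (X n i) (β0 n) j * (1 - piv (X n i) (β0 n) j) := by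
        nlinarith [h.1, h.2]
      simp only [GEE.Ahalf, Matrix.mulVec_diagonal]
      rw [mul_pow, Real.sq_sqrt hnn]
    constructor
    · rw [Finset.mul_sum]
      refine Finset.sum_le_sum fun j _ => ?_
      rw [hval j]
      have h := hA2 n i j
      have hlow : b1 * (1 - b2) ≤ piv (X n i) (β0 n) j * (1 - piv (X n i) (β0 n) j) := by
        nlinarith [h.1, h.2]
      exact mul_le_mul_of_nonneg_right hlow (sq_nonneg _)
    · rw [Finset.mul_sum]
      refine Finset.sum_le_sum fun j _ => ?_
      rw [hval j]
      have h := hA2 n i j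
      have hup : piv (X n i) (β0 n) j * (1 - piv (X n i) (β0 n) j) ≤ b2 * (1 - b1) := by
        nlinarith [h.1, h.2]
      exact mul_le_mul_of_nonneg_right hup (sq_nonneg _)
  -- quadratic form of a single X-cluster
  have hSz : ∀ n (i : Fin n) (v : Fin (p n) → ℝ),
      v ⬝ᵥ ((X n i)ᵀ * X n i).mulVec v = ∑ j, ((X n i).mulVec v) j ^ 2 := by
    intro n i v
    rw [← dot_self_eq, dot_self_sq]
  -- quadratic forms of the clusters
  have hMq : ∀ n (i : Fin n) (v : Fin (p n) → ℝ),
      v ⬝ᵥ (Mcluster (X n i) Rbar⁻¹ R0 (β0 n)).mulVec v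
      = ((Rbar⁻¹).mulVec ((Ahalf (X n i) (β0 n)).mulVec ((X n i).mulVec v))) ⬝ᵥ
        R0.mulVec ((Rbar⁻¹).mulVec ((Ahalf (X n i) (β0 n)).mulVec ((X n i).mulVec v))) := by
    intro n i v
    rw [Mcluster_eq, dot_congr]
    simp only [← Matrix.mulVec_mulVec]
    rw [dot_mulVec_symm hWt]
  have hHq : ∀ n (i : Fin n) (v : Fin (p n) → ℝ),
      v ⬝ᵥ (Hcluster (X n i) Rbar⁻¹ (β0 n)).mulVec v
      = ((Ahalf (X n i) (β0 n)).mulVec ((X n i).mulVec v)) ⬝ᵥ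
        (Rbar⁻¹).mulVec ((Ahalf (X n i) (β0 n)).mulVec ((X n i).mulVec v)) := by
    intro n i v
    rw [Hcluster_eq, dot_congr]
    simp only [← Matrix.mulVec_mulVec]
  -- per-cluster inequalities
  have hMc : ∀ n (i : Fin n) (v : Fin (p n) → ℝ),
      cR0 * (b1 * (1 - b2)) / CRb * (v ⬝ᵥ ((X n i)ᵀ * X n i).mulVec v)
        ≤ v ⬝ᵥ (Mcluster (X n i) Rbar⁻¹ R0 (β0 n)).mulVec v := by
    intro n i v
    have h2 : (∑ j, ((Ahalf (X n i) (β0 n)).mulVec ((X n i).mulVec v) j) ^ 2)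
        ≤ CRb * ∑ j, ((Rbar⁻¹).mulVec ((Ahalf (X n i) (β0 n)).mulVec ((X n i).mulVec v)) j) ^ 2 := by
      have hwu : Rbar.mulVec ((Rbar⁻¹).mulVec ((Ahalf (X n i) (β0 n)).mulVec ((X n i).mulVec v)))
          = (Ahalf (X n i) (β0 n)).mulVec ((X n i).mulVec v) := by
        rw [Matrix.mulVec_mulVec, hRbinv, Matrix.one_mulVec]
      calc (∑ j, ((Ahalf (X n i) (β0 n)).mulVec ((X n i).mulVec v) j) ^ 2)
          = (Rbar.mulVec ((Rbar⁻¹).mulVec ((Ahalf (X n i) (β0 n)).mulVec ((X n i).mulVec v)))) ⬝ᵥ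
            (Rbar.mulVec ((Rbar⁻¹).mulVec ((Ahalf (X n i) (β0 n)).mulVec ((X n i).mulVec v)))) := by
            rw [hwu, dot_self_sq]
        _ = ((Rbar⁻¹).mulVec ((Ahalf (X n i) (β0 n)).mulVec ((X n i).mulVec v))) ⬝ᵥ
            (Rbarᵀ * Rbar).mulVec ((Rbar⁻¹).mulVec ((Ahalf (X n i) (β0 n)).mulVec ((X n i).mulVec v))) :=
            dot_self_eq _ _
        _ ≤ CRb * ∑ j, ((Rbar⁻¹).mulVec ((Ahalf (X n i) (β0 n)).mulVec ((X n i).mulVec v)) j) ^ 2 :=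
            (le_abs_self _).trans (hRbup _)
    rw [hSz n i v, hMq n i v]
    exact chain_low hcR0 hCRb (hR0low _) h2 (hAbound n i _).1
  have hHcUp : ∀ n (i : Fin n) (v : Fin (p n) → ℝ),
      v ⬝ᵥ (Hcluster (X n i) Rbar⁻¹ (β0 n)).mulVec v
        ≤ CW * (b2 * (1 - b1)) * (v ⬝ᵥ ((X n i)ᵀ * X n i).mulVec v) := by
    intro n i v
    rw [hSz n i v, hHq n i v]
    have h1 := (le_abs_self _).trans
      (hWup ((Ahalf (X n i) (β0 n)).mulVec ((X n i).mulVec v)))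
    have h2 := (hAbound n i ((X n i).mulVec v)).2
    nlinarith [mul_le_mul_of_nonneg_left h2 hCW.le]
  have hHcLow : ∀ n (i : Fin n) (v : Fin (p n) → ℝ),
      cW * (b1 * (1 - b2)) * (v ⬝ᵥ ((X n i)ᵀ * X n i).mulVec v)
        ≤ v ⬝ᵥ (Hcluster (X n i) Rbar⁻¹ (β0 n)).mulVec v := by
    intro n i v
    rw [hSz n i v, hHq n i v]
    have h1 := hWlow ((Ahalf (X n i) (β0 n)).mulVec ((X n i).mulVec v))
    have h2 := (hAbound n i ((X n i).mulVec v)).1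
    nlinarith [mul_le_mul_of_nonneg_left h2 hcW.le]
  -- summed inequalities
  have hSnn : ∀ n (v : Fin (p n) → ℝ),
      0 ≤ v ⬝ᵥ (∑ i, (X n i)ᵀ * X n i).mulVec v := by
    intro n v
    rw [dot_sum]
    refine Finset.sum_nonneg fun i _ => ?_
    rw [hSz n i v]
    exact sum_sq_nonneg _
  have hMv : ∀ n (v : Fin (p n) → ℝ),
      cR0 * (b1 * (1 - b2)) / CRb * (v ⬝ᵥ (∑ i, (X n i)ᵀ * X n i).mulVec v)
        ≤ v ⬝ᵥ (∑ i, Mcluster (X n i) Rbar⁻¹ R0 (β0 n)).mulVec v := by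
    intro n v
    rw [dot_sum, dot_sum, Finset.mul_sum]
    exact Finset.sum_le_sum fun i _ => hMc n i v
  have hHvUp : ∀ n (v : Fin (p n) → ℝ),
      v ⬝ᵥ (∑ i, Hcluster (X n i) Rbar⁻¹ (β0 n)).mulVec v
        ≤ CW * (b2 * (1 - b1)) * (v ⬝ᵥ (∑ i, (X n i)ᵀ * X n i).mulVec v) := by
    intro n v
    rw [dot_sum, dot_sum, Finset.mul_sum]
    exact Finset.sum_le_sum fun i _ => hHcUp n i v
  have hHvLow : ∀ n (v : Fin (p n) → ℝ),
      cW * (b1 * (1 - b2)) * (v ⬝ᵥ (∑ i, (X n i)ᵀ * X n i).mulVec v)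
        ≤ v ⬝ᵥ (∑ i, Hcluster (X n i) Rbar⁻¹ (β0 n)).mulVec v := by
    intro n v
    rw [dot_sum, dot_sum, Finset.mul_sum]
    exact Finset.sum_le_sum fun i _ => hHcLow n i v
  have hc1 : (0:ℝ) < cR0 * (b1 * (1 - b2)) / CRb := by positivity
  have hc2 : (0:ℝ) < CW * (b2 * (1 - b1)) := by positivity
  -- Conjunct 1
  have conj1 : ∀ n,
      cR0 * (b1 * (1 - b2)) / CRb * lmin (∑ i, (X n i)ᵀ * X n i) ≤
        lmin (∑ i, Mcluster (X n i) Rbar⁻¹ R0 (β0 n)) := by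
    intro n
    refine le_lmin (hp n) fun v hv => ?_
    calc cR0 * (b1 * (1 - b2)) / CRb * lmin (∑ i, (X n i)ᵀ * X n i)
        ≤ cR0 * (b1 * (1 - b2)) / CRb * (v ⬝ᵥ (∑ i, (X n i)ᵀ * X n i).mulVec v) :=
          mul_le_mul_of_nonneg_left (lmin_le hv) hc1.le
      _ ≤ _ := hMv n v
  -- Conjunct 2
  have conj2 : ∀ n,
      lmax (∑ i, Hcluster (X n i) Rbar⁻¹ (β0 n)) ≤
        CW * (b2 * (1 - b1)) * lmax (∑ i, (X n i)ᵀ * X n i) := by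
    intro n
    refine lmax_le (hp n) fun v hv => ?_
    calc v ⬝ᵥ (∑ i, Hcluster (X n i) Rbar⁻¹ (β0 n)).mulVec v
        ≤ CW * (b2 * (1 - b1)) * (v ⬝ᵥ (∑ i, (X n i)ᵀ * X n i).mulVec v) := hHvUp n v
      _ ≤ CW * (b2 * (1 - b1)) * lmax (∑ i, (X n i)ᵀ * X n i) :=
          mul_le_mul_of_nonneg_left (le_lmax hv) hc2.le
  -- positivity of lmax H and nonnegativity of lmin M, and symmetry/PD of H
  have hHsymm : ∀ n, (∑ i, Hcluster (X n i) Rbar⁻¹ (β0 n))ᵀ = ∑ i, Hcluster (X n i) Rbar⁻¹ (β0 n) := by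
    intro n
    rw [Matrix.transpose_sum]
    refine Finset.sum_congr rfl fun i _ => ?_
    rw [Hcluster_eq]
    simp [Matrix.transpose_mul, Matrix.transpose_transpose, Matrix.mul_assoc, hWt]
  have hHpsd : ∀ n (x : Fin (p n) → ℝ),
      0 ≤ x ⬝ᵥ (∑ i, Hcluster (X n i) Rbar⁻¹ (β0 n)).mulVec x := by
    intro n x
    refine le_trans ?_ (hHvLow n x)
    exact mul_nonneg (by positivity) (hSnn n x)
  have hSpos : ∀ n, 0 < n → ∀ v : Fin (p n) → ℝ, v ≠ 0 →
      0 < v ⬝ᵥ (∑ i, (X n i)ᵀ * X n i).mulVec v := by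
    intro n hn v hv
    have h1 := (hA3 n hn v).1
    have hsum : 0 < ∑ k, v k ^ 2 := by
      rcases eq_or_lt_of_le (sum_sq_nonneg v) with h0 | h
      · exact absurd (sq_zero_vec h0) hv
      · exact h
    have hnpos : (0:ℝ) < (n:ℝ) := by exact_mod_cast hn
    have h2 : 0 < (n:ℝ)⁻¹ * (v ⬝ᵥ (∑ i, (X n i)ᵀ * X n i).mulVec v) :=
      lt_of_lt_of_le (mul_pos hb3 hsum) h1
    nlinarith [h2, inv_pos.2 hnpos]
  have hHpd : ∀ n, 0 < n → (∑ i, Hcluster (X n i) Rbar⁻¹ (β0 n)).PosDef := by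
    intro n hn
    refine Matrix.PosDef.of_dotProduct_mulVec_pos ?_ ?_
    · show _ᴴ = _
      rw [Matrix.conjTranspose_eq_transpose_of_trivial]
      exact hHsymm n
    · intro x hx
      have h1 := hHvLow n x
      have h2 := hSpos n hn x hx
      have : 0 < cW * (b1 * (1 - b2)) * (x ⬝ᵥ (∑ i, (X n i)ᵀ * X n i).mulVec x) := by positivity
      simpa using lt_of_lt_of_le this h1
  have hLM0 : ∀ n, 0 ≤ lmin (∑ i, Mcluster (X n i) Rbar⁻¹ R0 (β0 n)) := by
    intro n
    refine le_lmin (hp n) fun v hv => ?_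
    refine le_trans ?_ (hMv n v)
    exact mul_nonneg (by positivity) (hSnn n v)
  have hUH0 : ∀ n, 0 < n → 0 < lmax (∑ i, Hcluster (X n i) Rbar⁻¹ (β0 n)) := by
    intro n hn
    obtain ⟨v0, hv0⟩ := unit_exists (hp n)
    refine lt_of_lt_of_le ?_ (le_lmax hv0)
    refine lt_of_lt_of_le ?_ (hHvLow n v0)
    have hv0ne : v0 ≠ 0 := by
      intro h
      rw [h] at hv0
      rw [vnorm] at hv0
      simp at hv0
    exact mul_pos (by positivity) (hSpos n hn v0 hv0ne)
  -- Conjunct 3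
  have conj3 : ∀ n, 0 < n →
      lmin (∑ i, Mcluster (X n i) Rbar⁻¹ R0 (β0 n)) /
          lmax (∑ i, Hcluster (X n i) Rbar⁻¹ (β0 n)) ^ 2 ≤ lmin (Sig n) := by
    intro n hn
    have hpd := hHpd n hn
    have hdet := hpd.det_pos.ne'.isUnit
    have hHinv : (∑ i, Hcluster (X n i) Rbar⁻¹ (β0 n)) *
        (∑ i, Hcluster (X n i) Rbar⁻¹ (β0 n))⁻¹ = 1 := Matrix.mul_nonsing_inv _ hdet
    have hHinvT : ((∑ i, Hcluster (X n i) Rbar⁻¹ (β0 n))⁻¹)ᵀ =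
        (∑ i, Hcluster (X n i) Rbar⁻¹ (β0 n))⁻¹ := by
      rw [Matrix.transpose_nonsing_inv, hHsymm n]
    refine le_lmin (hp n) fun v hv => ?_
    set Hn := ∑ i, Hcluster (X n i) Rbar⁻¹ (β0 n) with hHn
    set Mn := ∑ i, Mcluster (X n i) Rbar⁻¹ R0 (β0 n) with hMn
    set u := (Hn⁻¹).mulVec v with hudef
    have hveq : Hn.mulVec u = v := by
      rw [hudef, Matrix.mulVec_mulVec, hHinv, Matrix.one_mulVec]
    have hSigq : v ⬝ᵥ (Sig n).mulVec v = u ⬝ᵥ Mn.mulVec u := by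
      rw [hSig n]
      rw [show Hn⁻¹ * Mn * Hn⁻¹ = (Hn⁻¹)ᵀ * Mn * Hn⁻¹ from by rw [hHinvT]]
      rw [dot_congr]
    have hHu1 : (Hn.mulVec u) ⬝ᵥ (Hn.mulVec u) = 1 := by
      rw [hveq, dot_self_sq, unit_sum_sq hv]
    have hlhs : u ⬝ᵥ Hn.mulVec (Hn.mulVec u) = 1 := by
      rw [dot_symm (hHsymm n) (Hn.mulVec u) u]
      exact hHu1
    have hcs := cs_psd Hn (hHsymm n) (hHpsd n) u (Hn.mulVec u)
    rw [hlhs] at hcs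
    have hb1' : u ⬝ᵥ Hn.mulVec u ≤ lmax Hn * ∑ j, u j ^ 2 := lmax_quad Hn u
    have hb2' : (Hn.mulVec u) ⬝ᵥ Hn.mulVec (Hn.mulVec u) ≤ lmax Hn := by
      refine le_trans (lmax_quad Hn _) ?_
      rw [← dot_self_sq, hHu1, mul_one]
    have hU := hUH0 n hn
    have husq : lmin Mn / lmax Hn ^ 2 ≤ lmin Mn * ∑ j, u j ^ 2 := by
      have h1 : (1:ℝ) ≤ (lmax Hn * ∑ j, u j ^ 2) * lmax Hn := by
        have hnn1 : 0 ≤ u ⬝ᵥ Hn.mulVec u := hHpsd n u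
        have hnn2 : 0 ≤ (Hn.mulVec u) ⬝ᵥ Hn.mulVec (Hn.mulVec u) := hHpsd n _
        calc (1:ℝ) = 1 ^ 2 := by norm_num
          _ ≤ (u ⬝ᵥ Hn.mulVec u) * ((Hn.mulVec u) ⬝ᵥ Hn.mulVec (Hn.mulVec u)) := hcs
          _ ≤ (lmax Hn * ∑ j, u j ^ 2) * lmax Hn := by
              refine mul_le_mul hb1' hb2' hnn2 ?_
              have := sum_sq_nonneg u
              positivity
      rw [div_le_iff₀ (by positivity : (0:ℝ) < lmax Hn ^ 2)]
      nlinarith [mul_le_mul_of_nonneg_left h1 (hLM0 n)]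
    have hfin : lmin Mn / lmax Hn ^ 2 ≤ v ⬝ᵥ (Sig n).mulVec v := by
      rw [hSigq]
      exact le_trans husq (lmin_quad Mn u)
    exact hfin
  refine ⟨⟨cR0 * (b1 * (1 - b2)) / CRb, hc1, conj1⟩,
    ⟨CW * (b2 * (1 - b1)), hc2, conj2⟩, conj3, ?_⟩
  -- Conjunct 4
  have hb3b4 : b3 ≤ b4 := by
    obtain ⟨v0, hv0⟩ := unit_exists (hp 1)
    have h := hA3 1 Nat.one_pos v0
    rw [unit_sum_sq hv0] at h
    have := le_trans h.1 h.2
    linarith [this]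
  have hb4 : (0:ℝ) < b4 := lt_of_lt_of_le hb3 hb3b4
  refine ⟨cR0 * (b1 * (1 - b2)) / CRb * b3 / (CW * (b2 * (1 - b1)) * b4) ^ 2, by positivity, ?_⟩
  rw [Filter.eventually_atTop]
  refine ⟨1, fun n hn => ?_⟩
  have hn0 : 0 < n := hn
  have hnpos : (0:ℝ) < (n:ℝ) := by exact_mod_cast hn0
  -- lmin S ≥ n b3, lmax S ≤ n b4
  have hLS : (n:ℝ) * b3 ≤ lmin (∑ i, (X n i)ᵀ * X n i) := by
    refine le_lmin (hp n) fun v hv => ?_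
    have h := (hA3 n hn0 v).1
    rw [unit_sum_sq hv, mul_one] at h
    have h2 := mul_le_mul_of_nonneg_left h hnpos.le
    rwa [← mul_assoc, mul_inv_cancel₀ hnpos.ne', one_mul] at h2
  have hUS : lmax (∑ i, (X n i)ᵀ * X n i) ≤ (n:ℝ) * b4 := by
    refine lmax_le (hp n) fun v hv => ?_
    have h := (hA3 n hn0 v).2
    rw [unit_sum_sq hv, mul_one] at h
    have h2 := mul_le_mul_of_nonneg_left h hnpos.le
    rwa [← mul_assoc, mul_inv_cancel₀ hnpos.ne', one_mul] at h2
  have hLM : cR0 * (b1 * (1 - b2)) / CRb * ((n:ℝ) * b3) ≤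
      lmin (∑ i, Mcluster (X n i) Rbar⁻¹ R0 (β0 n)) :=
    le_trans (mul_le_mul_of_nonneg_left hLS hc1.le) (conj1 n)
  have hUH : lmax (∑ i, Hcluster (X n i) Rbar⁻¹ (β0 n)) ≤
      CW * (b2 * (1 - b1)) * ((n:ℝ) * b4) :=
    le_trans (conj2 n) (mul_le_mul_of_nonneg_left hUS hc2.le)
  have hU := hUH0 n hn0
  have hstep : cR0 * (b1 * (1 - b2)) / CRb * ((n:ℝ) * b3) /
      (CW * (b2 * (1 - b1)) * ((n:ℝ) * b4)) ^ 2 ≤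
      lmin (∑ i, Mcluster (X n i) Rbar⁻¹ R0 (β0 n)) /
        lmax (∑ i, Hcluster (X n i) Rbar⁻¹ (β0 n)) ^ 2 := by
    refine div_le_div₀ (hLM0 n) hLM (by positivity) ?_
    exact pow_le_pow_left₀ hU.le hUH 2
  refine le_trans (le_of_eq ?_) (le_trans hstep (conj3 n hn0))
  field_simp
end
end
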